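/- arXiv:1709.09223 — 3 statements merged into one kernel-verified Lean document; each statement's English description precedes it below -/
import Mathlib

section
/- For every integer n ≥ 0, the number of n-step half-space walks on the lattice strip ℤ × {−1,0,1} satisfies h_{[−1,1],n} ≤ (1 + n + n²) · b_{[−1,1],n}, where b_{[−1,1],n} is the number of n-step bridges on ℤ × {−1,0,1} (with h_{[−1,1],0} = b_{[−1,1],0} = 1 by convention). -/
open Filter Finset

/-- An `n`-step self-avoiding walk on the lattice strip `ℤ × {a,…,b}`:
a sequence of pairwise distinct points starting at the origin, with second
coordinates in `[a,b]`, each consecutive pair at `ℓ¹`-distance `1`. -/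
def IsSAW (a b : ℤ) (n : ℕ) (w : Fin (n + 1) → ℤ × ℤ) : Prop :=
  w 0 = (0, 0) ∧ Function.Injective w ∧
  (∀ i, a ≤ (w i).2 ∧ (w i).2 ≤ b) ∧
  ∀ i : Fin n, |(w i.succ).1 - (w i.castSucc).1| + |(w i.succ).2 - (w i.castSucc).2| = 1

/-- The number `c_{[a,b],n}` of `n`-step SAWs on the strip `ℤ × {a,…,b}`. -/
noncomputable def numSAW (a b : ℤ) (n : ℕ) : ℕ :=
  Nat.card {w : Fin (n + 1) → ℤ × ℤ // IsSAW a b n w}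

/-- An `n`-step bridge: a SAW with `x₀ < x_j ≤ x_n` for all `j ≠ 0`. -/
def IsBridge (a b : ℤ) (n : ℕ) (w : Fin (n + 1) → ℤ × ℤ) : Prop :=
  IsSAW a b n w ∧
  ∀ j : Fin (n + 1), j ≠ 0 → (w 0).1 < (w j).1 ∧ (w j).1 ≤ (w (Fin.last n)).1

/-- The number `b_{[a,b],n}` of `n`-step bridges on the strip `ℤ × {a,…,b}`. -/
noncomputable def numBridge (a b : ℤ) (n : ℕ) : ℕ :=
  Nat.card {w : Fin (n + 1) → ℤ × ℤ // IsBridge a b n w}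

/-- An `n`-step half-space walk: a SAW with `x₀ < x_j` for all `j ≠ 0`. -/
def IsHalfSpace (a b : ℤ) (n : ℕ) (w : Fin (n + 1) → ℤ × ℤ) : Prop :=
  IsSAW a b n w ∧ ∀ j : Fin (n + 1), j ≠ 0 → (w 0).1 < (w j).1

/-- The number `h_{[a,b],n}` of `n`-step half-space walks on `ℤ × {a,…,b}`. -/
noncomputable def numHalfSpace (a b : ℤ) (n : ℕ) : ℕ :=
  Nat.card {w : Fin (n + 1) → ℤ × ℤ // IsHalfSpace a b n w}

/-- The connective constant `μ_{[a,b]} = lim_{n→∞} (c_{[a,b],n})^(1/n)`. -/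
noncomputable def connConst (a b : ℤ) : ℝ :=
  limUnder atTop (fun n : ℕ => (numSAW a b n : ℝ) ^ ((n : ℝ)⁻¹))

/-- Reflection of the part of the walk after index `j` about the column of `w j`. -/
def reflAt (n : ℕ) (j : Fin (n + 1)) (w : Fin (n + 1) → ℤ × ℤ) : Fin (n + 1) → ℤ × ℤ :=
  fun k => if k ≤ j then w k else (2 * (w j).1 - (w k).1, (w k).2)

lemma reflAt_of_le {n : ℕ} {j k : Fin (n+1)} (h : k ≤ j) (w : Fin (n+1) → ℤ × ℤ) :
    reflAt n j w k = w k := if_pos h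

lemma reflAt_of_gt {n : ℕ} {j k : Fin (n+1)} (h : j < k) (w : Fin (n+1) → ℤ × ℤ) :
    reflAt n j w k = (2 * (w j).1 - (w k).1, (w k).2) := if_neg (not_le.mpr h)

lemma reflAt_reflAt {n : ℕ} (j : Fin (n+1)) (w : Fin (n+1) → ℤ × ℤ) :
    reflAt n j (reflAt n j w) = w := by
  funext k
  by_cases h : k ≤ j
  · rw [reflAt_of_le h, reflAt_of_le h]
  · rw [reflAt_of_gt (not_le.mp h)]
    rw [reflAt_of_le (le_refl j), reflAt_of_gt (not_le.mp h)]
    simp [Prod.ext_iff]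

lemma ivt_nat (f : ℕ → ℤ) (hf : ∀ m, f (m+1) ≤ f m + 1) (c : ℤ) :
    ∀ j i, i ≤ j → f i ≤ c → c ≤ f j → ∃ k, i ≤ k ∧ k ≤ j ∧ f k = c := by
  intro j
  induction j with
  | zero => intro i hi h1 h2
            have hi0 : i = 0 := Nat.le_zero.mp hi
            subst hi0
            exact ⟨0, le_refl _, le_refl _, le_antisymm h1 h2⟩
  | succ j ih =>
    intro i hi h1 h2
    rcases Nat.lt_or_ge i (j+1) with h | h
    · by_cases hc : c ≤ f j
      · obtain ⟨k, hk1, hk2, hk3⟩ := ih i (Nat.lt_succ_iff.mp h) h1 hc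
        exact ⟨k, hk1, Nat.le_succ_of_le hk2, hk3⟩
      · exact ⟨j+1, hi, le_refl _, by have := hf j; omega⟩
    · have hij : i = j + 1 := le_antisymm hi h
      subst hij
      exact ⟨j+1, le_refl _, le_refl _, le_antisymm h1 h2⟩

lemma ivt_fin_up {n : ℕ} (X : Fin (n+1) → ℤ)
    (hstep : ∀ i : Fin n, |X i.succ - X i.castSucc| ≤ 1)
    (c : ℤ) (i j : Fin (n+1)) (hij : i ≤ j) (h1 : X i ≤ c) (h2 : c ≤ X j) :
    ∃ k, i ≤ k ∧ k ≤ j ∧ X k = c := by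
  set f : ℕ → ℤ := fun m => X ⟨min m n, by omega⟩ with hf
  have hfv : ∀ k : Fin (n+1), f k.1 = X k := by
    intro k
    have : min k.1 n = k.1 := by omega
    simp only [hf, this]
  have hstep' : ∀ m, f (m+1) ≤ f m + 1 := by
    intro m
    rcases Nat.lt_or_ge m n with h | h
    · have h1 : min m n = m := by omega
      have h2 : min (m+1) n = m + 1 := by omega
      have := hstep ⟨m, h⟩
      simp only [hf, h1, h2]
      rw [show (⟨m+1, by omega⟩ : Fin (n+1)) = (⟨m, h⟩ : Fin n).succ from rfl,
        show (⟨m, by omega⟩ : Fin (n+1)) = (⟨m, h⟩ : Fin n).castSucc from rfl]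
      have h3 := abs_nonneg (X (⟨m, h⟩ : Fin n).succ - X (⟨m, h⟩ : Fin n).castSucc)
      have h4 := le_abs_self (X (⟨m, h⟩ : Fin n).succ - X (⟨m, h⟩ : Fin n).castSucc)
      omega
    · have h1 : min m n = n := by omega
      have h2 : min (m+1) n = n := by omega
      simp only [hf, h1, h2]
      omega
  obtain ⟨k, hk1, hk2, hk3⟩ := ivt_nat f hstep' c j.1 i.1 hij (by rw [hfv]; exact h1)
    (by rw [hfv]; exact h2)
  refine ⟨⟨k, by omega⟩, ?_, ?_, ?_⟩
  · exact hk1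
  · exact hk2
  · exact (hfv ⟨k, by omega⟩).symm.trans hk3

lemma ivt_fin_down {n : ℕ} (X : Fin (n+1) → ℤ)
    (hstep : ∀ i : Fin n, |X i.succ - X i.castSucc| ≤ 1)
    (c : ℤ) (i j : Fin (n+1)) (hij : i ≤ j) (h1 : c ≤ X i) (h2 : X j ≤ c) :
    ∃ k, i ≤ k ∧ k ≤ j ∧ X k = c := by
  obtain ⟨k, hk1, hk2, hk3⟩ := ivt_fin_up (fun k => -X k)
    (fun i => by simp only [neg_sub_neg]; rw [abs_sub_comm]; exact hstep i)
    (-c) i j hij (by simpa using h1) (by simpa using h2)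
  exact ⟨k, hk1, hk2, neg_inj.mp hk3⟩

lemma exists_lastArgmax {m : ℕ} (f : Fin (m+1) → ℤ) :
    ∃ j, (∀ k, f k ≤ f j) ∧ ∀ k, j < k → f k < f j := by
  obtain ⟨i0, -, hi0⟩ := Finset.exists_max_image Finset.univ f ⟨0, Finset.mem_univ 0⟩
  set t := Finset.univ.filter (fun i : Fin (m+1) => ∀ k, f k ≤ f i) with ht
  have htne : t.Nonempty := ⟨i0, by simp [ht]; intro k; exact hi0 k (Finset.mem_univ k)⟩
  refine ⟨t.max' htne, ?_, ?_⟩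
  · have := t.max'_mem htne
    simp [ht] at this
    exact this
  · intro k hk
    by_contra hc
    push_neg at hc
    have hmax : ∀ l, f l ≤ f (t.max' htne) := by
      have := t.max'_mem htne
      simp [ht] at this
      exact this
    have hkt : k ∈ t := by
      simp [ht]
      intro l
      exact le_trans (hmax l) hc
    exact absurd (t.le_max' k hkt) (not_le.mpr hk)

lemma isBridge_of {a b : ℤ} {n : ℕ} {w : Fin (n+1) → ℤ × ℤ} (hw : IsHalfSpace a b n w)
    (h : ∀ k, (w k).1 ≤ (w (Fin.last n)).1) : IsBridge a b n w :=
  ⟨hw.1, fun j hj => ⟨hw.2 j hj, h j⟩⟩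

lemma saw_step_bound {a b : ℤ} {n : ℕ} {w : Fin (n+1) → ℤ × ℤ} (hw : IsSAW a b n w)
    (i : Fin n) : |(w i.succ).1 - (w i.castSucc).1| ≤ 1 := by
  have e := hw.2.2.2 i
  have := abs_nonneg ((w i.succ).2 - (w i.castSucc).2)
  linarith

lemma not_four_visits {n : ℕ} {w : Fin (n+1) → ℤ × ℤ} (hw : IsSAW (-1) 1 n w)
    (c : ℤ) (k1 k2 k3 k4 : Fin (n+1)) (h12 : k1 < k2) (h23 : k2 < k3) (h34 : k3 < k4)
    (e1 : (w k1).1 = c) (e2 : (w k2).1 = c) (e3 : (w k3).1 = c) (e4 : (w k4).1 = c) :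
    False := by
  classical
  set s : Finset (Fin (n+1)) := {k1, k2, k3, k4} with hs
  have hcard : s.card = 4 := by
    rw [hs]
    rw [Finset.card_insert_of_notMem (by
      simp only [Finset.mem_insert, Finset.mem_singleton]
      push_neg
      exact ⟨ne_of_lt h12, ne_of_lt (h12.trans h23), ne_of_lt ((h12.trans h23).trans h34)⟩),
      Finset.card_insert_of_notMem (by
      simp only [Finset.mem_insert, Finset.mem_singleton]
      push_neg
      exact ⟨ne_of_lt h23, ne_of_lt (h23.trans h34)⟩),
      Finset.card_insert_of_notMem (by
      simp only [Finset.mem_singleton]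
      exact ne_of_lt h34), Finset.card_singleton]
  have hmaps : ∀ k ∈ s, (w k).2 ∈ ({-1, 0, 1} : Finset ℤ) := by
    intro k _
    have := hw.2.2.1 k
    simp only [Finset.mem_insert, Finset.mem_singleton]
    omega
  have hlt : ({-1, 0, 1} : Finset ℤ).card < s.card := by
    rw [hcard]
    have : ({-1, 0, 1} : Finset ℤ).card = 3 := by decide
    omega
  obtain ⟨x, hx, y, hy, hxy, hg⟩ :=
    Finset.exists_ne_map_eq_of_card_lt_of_maps_to hlt hmaps
  have hfst : ∀ k ∈ s, (w k).1 = c := by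
    intro k hk
    simp only [hs, Finset.mem_insert, Finset.mem_singleton] at hk
    rcases hk with h|h|h|h <;> subst h <;> assumption
  have : w x = w y := Prod.ext (by rw [hfst x hx, hfst y hy]) hg
  exact hxy (hw.2.1 this)

lemma saw_bound {a b : ℤ} {n : ℕ} {w : Fin (n+1) → ℤ × ℤ} (hw : IsSAW a b n w) :
    ∀ m (h : m < n+1), |(w ⟨m, h⟩).1| ≤ m ∧ |(w ⟨m, h⟩).2| ≤ m := by
  intro m
  induction m with
  | zero =>
    intro h
    have h0 : (⟨0, h⟩ : Fin (n+1)) = 0 := rfl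
    rw [h0, hw.1]
    simp
  | succ m ih =>
    intro h
    have hmn : m < n := by omega
    have hm := ih (by omega)
    have e := hw.2.2.2 ⟨m, hmn⟩
    have hs : (⟨m, hmn⟩ : Fin n).succ = ⟨m+1, h⟩ := rfl
    have hc : (⟨m, hmn⟩ : Fin n).castSucc = ⟨m, by omega⟩ := rfl
    rw [hs, hc] at e
    have a1 : |(w ⟨m+1, h⟩).1 - (w ⟨m, by omega⟩).1| ≤ 1 := by
      have := abs_nonneg ((w ⟨m+1, h⟩).2 - (w ⟨m, by omega⟩).2); linarith
    have a2 : |(w ⟨m+1, h⟩).2 - (w ⟨m, by omega⟩).2| ≤ 1 := by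
      have := abs_nonneg ((w ⟨m+1, h⟩).1 - (w ⟨m, by omega⟩).1); linarith
    obtain ⟨p1, p2⟩ := abs_le.mp a1
    obtain ⟨q1, q2⟩ := abs_le.mp a2
    obtain ⟨r1, r2⟩ := abs_le.mp hm.1
    obtain ⟨t1, t2⟩ := abs_le.mp hm.2
    constructor <;> rw [abs_le] <;> constructor <;> push_cast <;> omega

lemma finite_pred {n : ℕ} (a b : ℤ) (P : (Fin (n+1) → ℤ × ℤ) → Prop)
    (hP : ∀ w, P w → IsSAW a b n w) : Finite {w : Fin (n+1) → ℤ × ℤ // P w} := by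
  classical
  haveI : Finite (Set.Icc (-(n:ℤ)) n) := (Set.finite_Icc _ _).to_subtype
  let g : {w : Fin (n+1) → ℤ × ℤ // P w} →
      (Fin (n+1) → Set.Icc (-(n:ℤ)) n × Set.Icc (-(n:ℤ)) n) := fun u i =>
    (⟨(u.1 i).1, by
      have := (saw_bound (hP u.1 u.2) i.1 i.2).1
      rw [Fin.eta] at this
      obtain ⟨r1, r2⟩ := abs_le.mp this
      have := i.2
      constructor <;> push_cast <;> omega⟩,
     ⟨(u.1 i).2, by
      have := (saw_bound (hP u.1 u.2) i.1 i.2).2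
      rw [Fin.eta] at this
      obtain ⟨r1, r2⟩ := abs_le.mp this
      have := i.2
      constructor <;> push_cast <;> omega⟩)
  apply Finite.of_injective g
  intro u v huv
  apply Subtype.ext
  funext i
  have h1 := congrFun huv i
  rw [Prod.ext_iff] at h1
  exact Prod.ext (congrArg Subtype.val h1.1) (congrArg Subtype.val h1.2)

lemma reflAt_isHalfSpace {a b : ℤ} {n : ℕ} {w : Fin (n+1) → ℤ × ℤ}
    (hw : IsHalfSpace a b n w) (j : Fin (n+1)) (hj : j ≠ 0)
    (hmax : ∀ k, (w k).1 ≤ (w j).1) (hlast : ∀ k, j < k → (w k).1 < (w j).1) :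
    IsHalfSpace a b n (reflAt n j w) := by
  obtain ⟨⟨h0, hinj, hcol, hstep⟩, hhs⟩ := hw
  have hM : 0 < (w j).1 := by
    have := hhs j hj
    rw [h0] at this
    exact this
  have hz : reflAt n j w 0 = w 0 := reflAt_of_le (Fin.zero_le j) w
  refine ⟨⟨hz.trans h0, ?_, ?_, ?_⟩, ?_⟩
  · -- injective
    intro k l hkl
    by_cases hk : k ≤ j <;> by_cases hl : l ≤ j
    · rw [reflAt_of_le hk, reflAt_of_le hl] at hkl
      exact hinj hkl
    · rw [reflAt_of_le hk, reflAt_of_gt (not_le.mp hl)] at hkl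
      exfalso
      have e1 : (w k).1 ≤ (w j).1 := hmax k
      have e2 : (w l).1 < (w j).1 := hlast l (not_le.mp hl)
      have := congrArg Prod.fst hkl
      simp at this
      omega
    · rw [reflAt_of_gt (not_le.mp hk), reflAt_of_le hl] at hkl
      exfalso
      have e1 : (w l).1 ≤ (w j).1 := hmax l
      have e2 : (w k).1 < (w j).1 := hlast k (not_le.mp hk)
      have := congrArg Prod.fst hkl
      simp at this
      omega
    · rw [reflAt_of_gt (not_le.mp hk), reflAt_of_gt (not_le.mp hl)] at hkl
      have e1 := congrArg Prod.fst hkl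
      have e2 := congrArg Prod.snd hkl
      simp at e1 e2
      exact hinj (Prod.ext (by omega) e2)
  · -- columns
    intro i
    by_cases hi : i ≤ j
    · rw [reflAt_of_le hi]; exact hcol i
    · rw [reflAt_of_gt (not_le.mp hi)]; exact hcol i
  · -- steps
    intro i
    have hcs : i.castSucc ≤ i.succ := Fin.castSucc_lt_succ.le
    by_cases hs : i.succ ≤ j
    · rw [reflAt_of_le hs, reflAt_of_le (le_trans hcs hs)]
      exact hstep i
    · by_cases hc : i.castSucc ≤ j
      · have hcj : i.castSucc = j := by
          have h1 : j.1 < i.1 + 1 := by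
            have := not_le.mp hs
            simpa [Fin.lt_def] using this
          have h2 : i.1 ≤ j.1 := by simpa [Fin.le_def] using hc
          apply Fin.ext
          simp
          omega
        rw [reflAt_of_gt (not_le.mp hs), reflAt_of_le hc]
        rw [← hcj]
        have e : 2 * (w i.castSucc).1 - (w i.succ).1 - (w i.castSucc).1
            = -((w i.succ).1 - (w i.castSucc).1) := by ring
        simp only []
        rw [e, abs_neg]
        exact hstep i
      · rw [reflAt_of_gt (not_le.mp hs), reflAt_of_gt (not_le.mp hc)]
        have e : 2 * (w j).1 - (w i.succ).1 - (2 * (w j).1 - (w i.castSucc).1)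
            = -((w i.succ).1 - (w i.castSucc).1) := by ring
        simp only []
        rw [e, abs_neg]
        exact hstep i
  · -- half-space
    intro k hk
    rw [hz]
    by_cases hkj : k ≤ j
    · rw [reflAt_of_le hkj]
      exact hhs k hk
    · rw [reflAt_of_gt (not_le.mp hkj)]
      have := hlast k (not_le.mp hkj)
      rw [h0]
      simp only []
      omega

def decode (n : ℕ) (t : Unit ⊕ Fin n ⊕ Fin n × Fin n) (v : Fin (n+1) → ℤ × ℤ) :
    Fin (n+1) → ℤ × ℤ :=
  match t with
  | Sum.inl _ => v
  | Sum.inr (Sum.inl s) => reflAt n ⟨s.1+1, Nat.succ_lt_succ s.2⟩ v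
  | Sum.inr (Sum.inr (s1, s2)) =>
      reflAt n ⟨s1.1+1, Nat.succ_lt_succ s1.2⟩ (reflAt n ⟨s2.1+1, Nat.succ_lt_succ s2.2⟩ v)

lemma exists_code {n : ℕ} (w : Fin (n+1) → ℤ × ℤ) (hw : IsHalfSpace (-1) 1 n w) :
    ∃ (t : Unit ⊕ Fin n ⊕ Fin n × Fin n) (v : Fin (n+1) → ℤ × ℤ),
      IsBridge (-1) 1 n v ∧ w = decode n t v := by
  have hX0 : (w 0).1 = 0 := by rw [hw.1.1]
  have hstepw : ∀ i : Fin n, |(w i.succ).1 - (w i.castSucc).1| ≤ 1 :=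
    saw_step_bound hw.1
  by_cases hb : ∀ k, (w k).1 ≤ (w (Fin.last n)).1
  · exact ⟨Sum.inl (), w, isBridge_of hw hb, rfl⟩
  push_neg at hb
  obtain ⟨kb, hkb⟩ := hb
  obtain ⟨j1, h1max, h1last⟩ := exists_lastArgmax (fun k => (w k).1)
  have h1max : ∀ k, (w k).1 ≤ (w j1).1 := h1max
  have h1last : ∀ k, j1 < k → (w k).1 < (w j1).1 := h1last
  -- j1 ≠ 0
  have hj1ne : j1 ≠ 0 := by
    intro h
    by_cases hkb0 : kb = 0
    · subst hkb0
      have hl0 : Fin.last n ≠ 0 := by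
        intro hl
        rw [hl] at hkb
        exact lt_irrefl _ hkb
      have := hw.2 (Fin.last n) hl0
      rw [hX0] at this
      rw [hX0] at hkb
      omega
    · have h1 := hw.2 kb hkb0
      have h2 := h1max kb
      rw [h] at h2
      rw [hX0] at h1 h2
      omega
  have hMpos : 0 < (w j1).1 := by
    have := hw.2 j1 hj1ne
    rw [hX0] at this
    exact this
  have hlastlt : (w (Fin.last n)).1 < (w j1).1 := lt_of_lt_of_le hkb (h1max kb)
  have hj1last : j1 ≠ Fin.last n := fun h => absurd (h ▸ hlastlt) (lt_irrefl _)
  have hj1ltlast : j1 < Fin.last n := lt_of_le_of_ne (Fin.le_last j1) hj1last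
  set w1 := reflAt n j1 w with hw1def
  have hw1 : IsHalfSpace (-1) 1 n w1 := reflAt_isHalfSpace hw j1 hj1ne h1max h1last
  have hX1le : ∀ k : Fin (n+1), k ≤ j1 → w1 k = w k := fun k hk => reflAt_of_le hk w
  have hX1gt : ∀ k : Fin (n+1), j1 < k → (w1 k).1 = 2*(w j1).1 - (w k).1 := by
    intro k hk
    rw [hw1def, reflAt_of_gt hk]
  have hj1pos : 1 ≤ j1.1 := by
    rcases Nat.eq_zero_or_pos j1.1 with h | h
    · exact absurd (Fin.ext h : j1 = 0) hj1ne
    · exact h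
  have hj1lt := j1.isLt
  by_cases hb1 : ∀ k, (w1 k).1 ≤ (w1 (Fin.last n)).1
  · -- one reflection suffices
    refine ⟨Sum.inr (Sum.inl ⟨j1.1 - 1, by omega⟩), w1, isBridge_of hw1 hb1, ?_⟩
    have hfix : (⟨j1.1 - 1 + 1, Nat.succ_lt_succ (by omega : j1.1 - 1 < n)⟩ : Fin (n+1)) = j1 :=
      Fin.ext (by simp; omega)
    show w = reflAt n ⟨j1.1 - 1 + 1, _⟩ w1
    rw [hfix, hw1def, reflAt_reflAt]
  · -- two reflections
    push_neg at hb1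
    obtain ⟨kb1, hkb1⟩ := hb1
    obtain ⟨j2, h2max, h2last⟩ := exists_lastArgmax (fun k => (w1 k).1)
    have h2max : ∀ k, (w1 k).1 ≤ (w1 j2).1 := h2max
    have h2last : ∀ k, j2 < k → (w1 k).1 < (w1 j2).1 := h2last
    have hX1last : (w1 (Fin.last n)).1 = 2*(w j1).1 - (w (Fin.last n)).1 :=
      hX1gt _ hj1ltlast
    have hX1lastbig : (w j1).1 < (w1 (Fin.last n)).1 := by
      rw [hX1last]; omega
    -- j1 < j2
    have hj1j2 : j1 < j2 := by
      by_contra hcon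
      push_neg at hcon
      have e1 : (w1 j2).1 = (w j2).1 := by rw [hX1le j2 hcon]
      have e2 := h2max (Fin.last n)
      have e3 := h1max j2
      omega
    have hj2ne : j2 ≠ 0 := by
      intro h
      rw [h] at hj1j2
      exact absurd hj1j2 (not_lt.mpr (Fin.zero_le j1))
    have hj2last : j2 ≠ Fin.last n := by
      intro h
      have := h2max kb1
      rw [h] at this
      omega
    have hj2ltlast : j2 < Fin.last n := lt_of_le_of_ne (Fin.le_last j2) hj2last
    set w2 := reflAt n j2 w1 with hw2def
    have hw2 : IsHalfSpace (-1) 1 n w2 := reflAt_isHalfSpace hw1 j2 hj2ne h2max h2last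
    -- notation
    set M := (w j1).1 with hM
    set m := (w j2).1 with hm
    set c := (w (Fin.last n)).1 with hc
    have hX1j2 : (w1 j2).1 = 2*M - m := hX1gt j2 hj1j2
    have hmc : m < c := by
      have := h2last (Fin.last n) hj2ltlast
      rw [hX1j2, hX1last] at this
      omega
    have hcM : c < M := hlastlt
    have hlastne0 : Fin.last n ≠ 0 := by
      intro h
      have : j2 < (0 : Fin (n+1)) := h ▸ hj2ltlast
      exact absurd this (Fin.not_lt.mpr (Fin.zero_le j2))
    have hcpos : 0 < c := by
      have := hw.2 (Fin.last n) hlastne0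
      rw [hX0] at this
      exact this
    -- w2 is a bridge
    have hbr2 : ∀ k, (w2 k).1 ≤ (w2 (Fin.last n)).1 := by
      have hX2last : (w2 (Fin.last n)).1 = 2*(w1 j2).1 - (w1 (Fin.last n)).1 := by
        rw [hw2def, reflAt_of_gt hj2ltlast]
      intro k
      by_cases hkj2 : k ≤ j2
      · rw [hw2def, reflAt_of_le hkj2, hX2last]
        have h1 := h2max k
        have h2 := h2max (Fin.last n)
        omega
      · push_neg at hkj2
        rw [hw2def, reflAt_of_gt hkj2, hX2last]
        simp only []
        have h1 := h2max k
        -- need : (w1 (Fin.last n)).1 ≤ (w1 k).1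
        by_contra hcon
        push_neg at hcon
        have hk0lt : (w1 k).1 < (w1 (Fin.last n)).1 := by omega
        -- translate to original walk
        have hXk : (w1 k).1 = 2*M - (w k).1 := hX1gt k (hj1j2.trans hkj2)
        have hXkc : c < (w k).1 := by
          rw [hXk, hX1last] at hk0lt
          omega
        have hkne : k ≠ Fin.last n := by
          intro h
          rw [h] at hk0lt
          exact lt_irrefl _ hk0lt
        have hkltlast : k < Fin.last n := lt_of_le_of_ne (Fin.le_last k) hkne
        -- m ≤ X l for all l > j1
        have hmin : ∀ l : Fin (n+1), j1 < l → m ≤ (w l).1 := by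
          intro l hl
          have := h2max l
          rw [hX1gt l hl, hX1j2] at this
          omega
        -- four visits to column c
        obtain ⟨ka, hka0, hkaj1, hkac⟩ := ivt_fin_up (fun k => (w k).1) hstepw c 0 j1
          (Fin.zero_le j1) (by show (w 0).1 ≤ c; omega) (le_of_lt hcM)
        have hkaltj1 : ka < j1 := by
          rcases lt_or_eq_of_le hkaj1 with h | h
          · exact h
          · rw [h] at hkac; omega
        obtain ⟨kb', hkbj1, hkbj2, hkbc⟩ := ivt_fin_down (fun k => (w k).1) hstepw c j1 j2
          (le_of_lt hj1j2) (le_of_lt hcM) (le_of_lt hmc)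
        have hkbgt : j1 < kb' := by
          rcases lt_or_eq_of_le hkbj1 with h | h
          · exact h
          · exfalso; rw [← h] at hkbc; omega
        have hkblt : kb' < j2 := by
          rcases lt_or_eq_of_le hkbj2 with h | h
          · exact h
          · rw [h] at hkbc; omega
        obtain ⟨kc, hkcj2, hkck, hkcc⟩ := ivt_fin_up (fun k => (w k).1) hstepw c j2 k
          (le_of_lt hkj2) (le_of_lt hmc) (le_of_lt hXkc)
        have hkcgt : j2 < kc := by
          rcases lt_or_eq_of_le hkcj2 with h | h
          · exact h
          · exfalso; rw [← h] at hkcc; omega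
        have hkclt : kc < Fin.last n := lt_of_le_of_lt hkck hkltlast
        exact not_four_visits hw.1 c ka kb' kc (Fin.last n)
          (hkaltj1.trans hkbgt) (hkblt.trans hkcgt) hkclt hkac hkbc hkcc rfl
    have hj2pos : 1 ≤ j2.1 := by
      rcases Nat.eq_zero_or_pos j2.1 with h | h
      · exact absurd (Fin.ext h : j2 = 0) hj2ne
      · exact h
    have hj2lt := j2.isLt
    refine ⟨Sum.inr (Sum.inr (⟨j1.1 - 1, by omega⟩, ⟨j2.1 - 1, by omega⟩)), w2,
      isBridge_of hw2 hbr2, ?_⟩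
    have hfix1 : (⟨j1.1 - 1 + 1, Nat.succ_lt_succ (by omega : j1.1 - 1 < n)⟩ : Fin (n+1)) = j1 :=
      Fin.ext (by simp; omega)
    have hfix2 : (⟨j2.1 - 1 + 1, Nat.succ_lt_succ (by omega : j2.1 - 1 < n)⟩ : Fin (n+1)) = j2 :=
      Fin.ext (by simp; omega)
    show w = reflAt n ⟨j1.1 - 1 + 1, _⟩ (reflAt n ⟨j2.1 - 1 + 1, _⟩ w2)
    rw [hfix1, hfix2, hw2def, reflAt_reflAt, hw1def, reflAt_reflAt]


/-- For all `n ≥ 0`, `h_{[−1,1],n} ≤ (1 + n + n²) · b_{[−1,1],n}`. -/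
theorem stmt_8 (n : ℕ) :
    numHalfSpace (-1) 1 n ≤ (1 + n + n ^ 2) * numBridge (-1) 1 n := by
  classical
  haveI hFB : Finite {w : Fin (n+1) → ℤ × ℤ // IsBridge (-1) 1 n w} :=
    finite_pred (-1) 1 _ (fun w hw => hw.1)
  set f : {w : Fin (n+1) → ℤ × ℤ // IsHalfSpace (-1) 1 n w} →
      (Unit ⊕ Fin n ⊕ Fin n × Fin n) × {w : Fin (n+1) → ℤ × ℤ // IsBridge (-1) 1 n w} :=
    fun u => ⟨(exists_code u.1 u.2).choose, ⟨(exists_code u.1 u.2).choose_spec.choose,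
      (exists_code u.1 u.2).choose_spec.choose_spec.1⟩⟩ with hf
  have hfspec : ∀ u, u.1 = decode n (f u).1 (f u).2.1 := fun u =>
    (exists_code u.1 u.2).choose_spec.choose_spec.2
  have hinj : Function.Injective f := by
    intro u v huv
    apply Subtype.ext
    rw [hfspec u, hfspec v, huv]
  have hcard := Nat.card_le_card_of_injective f hinj
  rw [Nat.card_prod] at hcard
  have hT : Nat.card ((Unit ⊕ Fin n ⊕ Fin n × Fin n)) = 1 + n + n^2 := by
    simp [Nat.card_sum, Nat.card_prod, Nat.card_eq_fintype_card, sq]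
    ring
  rw [hT] at hcard
  exact hcard
end

section
/- For every integer n ≥ 0, the number of n-step half-space walks on the lattice strip ℤ × {−1,0,1,2} satisfies h_{[−1,2],n} ≤ (1 + n + n² + n³) · b_{[−1,2],n}, where b_{[−1,2],n} is the number of n-step bridges on ℤ × {−1,0,1,2} (with h_{[−1,2],0} = b_{[−1,2],0} = 1 by convention). -/
open Filter Finset

namespace SWaux

lemma ivt_up (f : ℕ → ℤ) (hstep : ∀ k, |f (k+1) - f k| ≤ 1) :
    ∀ d i (c : ℤ), f i ≤ c → c ≤ f (i + d) → ∃ k, i ≤ k ∧ k ≤ i + d ∧ f k = c := by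
  intro d
  induction d with
  | zero => exact fun i c h1 h2 => ⟨i, le_refl _, le_refl _, le_antisymm h1 h2⟩
  | succ d ih =>
    intro i c h1 h2
    by_cases hc : f i = c
    · exact ⟨i, le_refl _, Nat.le_add_right _ _, hc⟩
    · have hs := hstep i
      have h3 : f (i+1) ≤ c := by
        rw [abs_le] at hs; omega
      have h4 : c ≤ f (i + 1 + d) := by
        have : i + 1 + d = i + (d + 1) := by omega
        rw [this]; exact h2
      obtain ⟨k, hk1, hk2, hk3⟩ := ih (i+1) c h3 h4
      exact ⟨k, by omega, by omega, hk3⟩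

lemma cross_up (f : ℕ → ℤ) (hstep : ∀ k, |f (k+1) - f k| ≤ 1) :
    ∀ d i (c : ℤ), f i ≤ c → c + 1 ≤ f (i + d) →
      ∃ t, i ≤ t ∧ t < i + d ∧ f t = c ∧ f (t+1) = c + 1 := by
  intro d
  induction d with
  | zero =>
    intro i c h1 h2
    rw [Nat.add_zero] at h2; omega
  | succ d ih =>
    intro i c h1 h2
    by_cases h3 : f (i+1) ≤ c
    · have h4 : c + 1 ≤ f (i + 1 + d) := by
        have : i + 1 + d = i + (d + 1) := by omega
        rw [this]; exact h2
      obtain ⟨t, ht1, ht2, ht3⟩ := ih (i+1) c h3 h4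
      exact ⟨t, by omega, by omega, ht3⟩
    · have hs := hstep i
      rw [abs_le] at hs
      refine ⟨i, le_refl _, by omega, by omega, by omega⟩

lemma cross_up' (f : ℕ → ℤ) (hstep : ∀ k, |f (k+1) - f k| ≤ 1)
    {i j : ℕ} (hij : i ≤ j) {c : ℤ} (h1 : f i ≤ c) (h2 : c + 1 ≤ f j) :
    ∃ t, i ≤ t ∧ t < j ∧ f t = c ∧ f (t+1) = c + 1 := by
  obtain ⟨d, rfl⟩ : ∃ d, j = i + d := ⟨j - i, by omega⟩
  exact cross_up f hstep d i c h1 h2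

lemma cross_down' (f : ℕ → ℤ) (hstep : ∀ k, |f (k+1) - f k| ≤ 1)
    {i j : ℕ} (hij : i ≤ j) {c : ℤ} (h1 : c + 1 ≤ f i) (h2 : f j ≤ c) :
    ∃ t, i ≤ t ∧ t < j ∧ f t = c + 1 ∧ f (t+1) = c := by
  have hstep' : ∀ k, |(fun k => 2*c + 1 - f k) (k+1) - (fun k => 2*c + 1 - f k) k| ≤ 1 := by
    intro k
    have := hstep k
    rw [abs_le] at *
    constructor <;> simp only <;> omega
  obtain ⟨t, ht1, ht2, ht3, ht4⟩ := cross_up' (fun k => 2*c+1 - f k) hstep' hij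
    (show 2*c+1 - f i ≤ c by omega) (show c + 1 ≤ 2*c+1 - f j by omega)
  have ht3' : 2*c+1 - f t = c := ht3
  have ht4' : 2*c+1 - f (t+1) = c + 1 := ht4
  exact ⟨t, ht1, ht2, by omega, by omega⟩

lemma exists_lastMax (f : ℕ → ℤ) {i n : ℕ} (hin : i ≤ n) :
    ∃ j, i ≤ j ∧ j ≤ n ∧ (∀ l, i ≤ l → l ≤ n → f l ≤ f j) ∧
      (∀ l, j < l → l ≤ n → f l < f j) := by
  classical
  obtain ⟨m, hm, hmax⟩ := Finset.exists_max_image (Finset.Icc i n) f ⟨i, by simp [hin]⟩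
  simp only [Finset.mem_Icc] at hm
  set S : Finset ℕ := (Finset.Icc i n).filter (fun l => f m ≤ f l) with hS
  have hmS : m ∈ S := by simp [hS, Finset.mem_Icc]; omega
  have hSne : S.Nonempty := ⟨m, hmS⟩
  have hmem : ∀ l ∈ S, (i ≤ l ∧ l ≤ n) ∧ f m ≤ f l := by
    intro l hl; simp [hS, Finset.mem_Icc] at hl; tauto
  have hj := S.max'_mem hSne
  obtain ⟨⟨hj1, hj2⟩, hj3⟩ := hmem _ hj
  refine ⟨S.max' hSne, hj1, hj2, ?_, ?_⟩
  · intro l h1 h2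
    calc f l ≤ f m := hmax l (by simp [Finset.mem_Icc]; omega)
    _ ≤ f (S.max' hSne) := hj3
  · intro l h1 h2
    by_contra hcon
    push_neg at hcon
    have hlS : l ∈ S := by
      simp only [hS, Finset.mem_filter, Finset.mem_Icc]
      exact ⟨⟨by omega, h2⟩, le_trans hj3 hcon⟩
    have := S.le_max' l hlS
    omega

lemma exists_lastMin (f : ℕ → ℤ) {i n : ℕ} (hin : i ≤ n) :
    ∃ j, i ≤ j ∧ j ≤ n ∧ (∀ l, i ≤ l → l ≤ n → f j ≤ f l) ∧
      (∀ l, j < l → l ≤ n → f j < f l) := by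
  obtain ⟨j, h1, h2, h3, h4⟩ := exists_lastMax (fun k => - f k) hin
  refine ⟨j, h1, h2, fun l a b => ?_, fun l a b => ?_⟩
  · have := h3 l a b; omega
  · have := h4 l a b; omega

noncomputable def lastMax (f : ℕ → ℤ) (i n : ℕ) : ℕ :=
  if h : i ≤ n then (exists_lastMax f h).choose else 0

lemma lastMax_spec (f : ℕ → ℤ) {i n : ℕ} (hin : i ≤ n) :
    i ≤ lastMax f i n ∧ lastMax f i n ≤ n ∧
    (∀ l, i ≤ l → l ≤ n → f l ≤ f (lastMax f i n)) ∧
    (∀ l, lastMax f i n < l → l ≤ n → f l < f (lastMax f i n)) := by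
  rw [lastMax, dif_pos hin]
  exact (exists_lastMax f hin).choose_spec

noncomputable def lastMin (f : ℕ → ℤ) (i n : ℕ) : ℕ :=
  if h : i ≤ n then (exists_lastMin f h).choose else 0

lemma lastMin_spec (f : ℕ → ℤ) {i n : ℕ} (hin : i ≤ n) :
    i ≤ lastMin f i n ∧ lastMin f i n ≤ n ∧
    (∀ l, i ≤ l → l ≤ n → f (lastMin f i n) ≤ f l) ∧
    (∀ l, lastMin f i n < l → l ≤ n → f (lastMin f i n) < f l) := by
  rw [lastMin, dif_pos hin]
  exact (exists_lastMin f hin).choose_spec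


/-- Reflect the part of the walk after index `j` about the vertical line through `w j`. -/
def foldAt (n : ℕ) (w : Fin (n+1) → ℤ × ℤ) (j : Fin (n+1)) : Fin (n+1) → ℤ × ℤ :=
  fun i => if i ≤ j then w i else (2 * (w j).1 - (w i).1, (w i).2)

lemma foldAt_of_le {n : ℕ} {w : Fin (n+1) → ℤ × ℤ} {j i : Fin (n+1)} (h : i ≤ j) :
    foldAt n w j i = w i := if_pos h

lemma foldAt_of_gt {n : ℕ} {w : Fin (n+1) → ℤ × ℤ} {j i : Fin (n+1)} (h : j < i) :
    foldAt n w j i = (2 * (w j).1 - (w i).1, (w i).2) := if_neg (not_le.mpr h)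

lemma foldAt_foldAt {n : ℕ} (w : Fin (n+1) → ℤ × ℤ) (j : Fin (n+1)) :
    foldAt n (foldAt n w j) j = w := by
  funext i
  by_cases h : i ≤ j
  · rw [foldAt_of_le h, foldAt_of_le h]
  · rw [not_le] at h
    rw [foldAt_of_gt h, foldAt_of_le (le_refl j), foldAt_of_gt h]
    ext <;> simp <;> ring

lemma fold_halfspace {a b : ℤ} {n : ℕ} {w : Fin (n+1) → ℤ × ℤ} (hw : IsHalfSpace a b n w)
    {j : Fin (n+1)}
    (hmax : ∀ i, (w i).1 ≤ (w j).1)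
    (hlast : ∀ i, j < i → (w i).1 < (w j).1) :
    IsHalfSpace a b n (foldAt n w j) := by
  obtain ⟨⟨h0, hinj, hstrip, hstep⟩, hhalf⟩ := hw
  have hx0 : (w 0).1 = 0 := by rw [h0]
  have hpos : ∀ i : Fin (n+1), i ≠ 0 → 1 ≤ (w i).1 := by
    intro i hi; have := hhalf i hi; omega
  refine ⟨⟨?_, ?_, ?_, ?_⟩, ?_⟩
  · rw [foldAt_of_le (Fin.zero_le j)]; exact h0
  · -- injectivity
    intro i i' h
    by_cases hi : i ≤ j <;> by_cases hi' : i' ≤ j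
    · rw [foldAt_of_le hi, foldAt_of_le hi'] at h; exact hinj h
    · rw [not_le] at hi'
      rw [foldAt_of_le hi, foldAt_of_gt hi'] at h
      exfalso
      have h1 : (w i).1 ≤ (w j).1 := hmax i
      have h2 : (w i').1 < (w j).1 := hlast i' hi'
      have := congrArg Prod.fst h
      simp only at this
      omega
    · rw [not_le] at hi
      rw [foldAt_of_gt hi, foldAt_of_le hi'] at h
      exfalso
      have h1 : (w i').1 ≤ (w j).1 := hmax i'
      have h2 : (w i).1 < (w j).1 := hlast i hi
      have := congrArg Prod.fst h
      simp only at this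
      omega
    · rw [not_le] at hi hi'
      rw [foldAt_of_gt hi, foldAt_of_gt hi'] at h
      apply hinj
      have h1 := congrArg Prod.fst h
      have h2 := congrArg Prod.snd h
      simp only at h1 h2
      ext <;> omega
  · -- strip
    intro i
    by_cases hi : i ≤ j
    · rw [foldAt_of_le hi]; exact hstrip i
    · rw [not_le] at hi; rw [foldAt_of_gt hi]; exact hstrip i
  · -- steps
    intro i
    have hs := hstep i
    have hcs : (i.castSucc : Fin (n+1)) < i.succ := Fin.castSucc_lt_succ
    by_cases h2 : i.succ ≤ j
    · rw [foldAt_of_le h2, foldAt_of_le (le_of_lt (lt_of_lt_of_le hcs h2))]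
      exact hs
    · rw [not_le] at h2
      by_cases h1 : i.castSucc ≤ j
      · -- junction: i.castSucc = j
        have hcj : i.castSucc = j := by
          have hv1 : (i.castSucc : ℕ) ≤ (j : ℕ) := h1
          have hv2 : (j : ℕ) < (i.succ : ℕ) := h2
          have hv3 : (i.succ : ℕ) = (i.castSucc : ℕ) + 1 := by
            simp [Fin.val_succ, Fin.coe_castSucc]
          apply Fin.ext; omega
        rw [foldAt_of_le h1, foldAt_of_gt h2]
        have hlt : (w i.succ).1 < (w j).1 := hlast i.succ h2
        rw [← hcj] at hlt ⊢
        simp only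
        rw [Int.abs_eq_natAbs, Int.abs_eq_natAbs] at hs ⊢
        omega
      · rw [not_le] at h1
        rw [foldAt_of_gt h1, foldAt_of_gt h2]
        simp only
        rw [Int.abs_eq_natAbs, Int.abs_eq_natAbs] at hs ⊢
        omega
  · -- half-space
    intro i hi
    rw [foldAt_of_le (Fin.zero_le j)]
    by_cases h1 : i ≤ j
    · rw [foldAt_of_le h1]; exact hhalf i hi
    · rw [not_le] at h1
      rw [foldAt_of_gt h1]
      simp only
      have h2 : (w i).1 < (w j).1 := hlast i h1
      have h3 : 1 ≤ (w i).1 := hpos i hi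
      omega

lemma halfspace_bridge {a b : ℤ} {n : ℕ} {w : Fin (n+1) → ℤ × ℤ} (hw : IsHalfSpace a b n w)
    (h : ∀ i, (w i).1 ≤ (w (Fin.last n)).1) : IsBridge a b n w :=
  ⟨hw.1, fun j hj => ⟨hw.2 j hj, h j⟩⟩


/-- x-coordinate along the walk, as a function on `ℕ` (clamped at `n`). -/
def X (n : ℕ) (w : Fin (n+1) → ℤ × ℤ) (k : ℕ) : ℤ := (w ⟨min k n, by omega⟩).1

def Y (n : ℕ) (w : Fin (n+1) → ℤ × ℤ) (k : ℕ) : ℤ := (w ⟨min k n, by omega⟩).2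

lemma X_eq {n : ℕ} (w : Fin (n+1) → ℤ × ℤ) {k : ℕ} (hk : k ≤ n) :
    X n w k = (w ⟨k, by omega⟩).1 := by
  simp [X, Nat.min_eq_left hk]

lemma Y_eq {n : ℕ} (w : Fin (n+1) → ℤ × ℤ) {k : ℕ} (hk : k ≤ n) :
    Y n w k = (w ⟨k, by omega⟩).2 := by
  simp [Y, Nat.min_eq_left hk]

lemma step_eq {a b : ℤ} {n : ℕ} {w : Fin (n+1) → ℤ × ℤ} (hw : IsSAW a b n w)
    {k : ℕ} (hk : k < n) :
    |X n w (k+1) - X n w k| + |Y n w (k+1) - Y n w k| = 1 := by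
  have := hw.2.2.2 ⟨k, hk⟩
  rw [X_eq w (by omega), X_eq w (by omega), Y_eq w (by omega), Y_eq w (by omega)]
  convert this using 3 <;> rfl

lemma X_step {a b : ℤ} {n : ℕ} {w : Fin (n+1) → ℤ × ℤ} (hw : IsSAW a b n w) (k : ℕ) :
    |X n w (k+1) - X n w k| ≤ 1 := by
  by_cases hk : k < n
  · have h := step_eq hw hk
    have := abs_nonneg (Y n w (k+1) - Y n w k)
    omega
  · have h1 : min (k+1) n = n := by omega
    have h2 : min k n = n := by omega
    simp [X, h1, h2]

lemma X_zero {a b : ℤ} {n : ℕ} {w : Fin (n+1) → ℤ × ℤ} (hw : IsSAW a b n w) :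
    X n w 0 = 0 := by
  rw [X_eq w (by omega)]
  have h0 : w 0 = (0,0) := hw.1
  have : (⟨0, by omega⟩ : Fin (n+1)) = 0 := rfl
  rw [this, h0]

lemma X_pos {a b : ℤ} {n : ℕ} {w : Fin (n+1) → ℤ × ℤ} (hw : IsHalfSpace a b n w)
    {k : ℕ} (h1 : 1 ≤ k) (h2 : k ≤ n) : 1 ≤ X n w k := by
  rw [X_eq w h2]
  have := hw.2 ⟨k, by omega⟩ (by simp [Fin.ext_iff]; omega)
  have hx0 : (w 0).1 = 0 := by rw [hw.1.1]
  omega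

/-- Any SAW stays within distance `n` of the origin in the x-coordinate. -/
lemma X_bound {a b : ℤ} {n : ℕ} {w : Fin (n+1) → ℤ × ℤ} (hw : IsSAW a b n w) :
    ∀ k, |X n w k| ≤ k := by
  intro k
  induction k with
  | zero => simp [X_zero hw]
  | succ k ih =>
    have := X_step hw k
    rw [abs_le] at *
    omega

lemma finite_walks (a b : ℤ) (n : ℕ) (P : (Fin (n+1) → ℤ × ℤ) → Prop)
    (hP : ∀ w, P w → IsSAW a b n w) : Finite {w : Fin (n+1) → ℤ × ℤ // P w} := by
  have h1 : Finite ↥(Set.Icc (-(n:ℤ)) (n:ℤ)) := (Set.finite_Icc _ _).to_subtype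
  have h2 : Finite ↥(Set.Icc a b) := (Set.finite_Icc _ _).to_subtype
  have key : ∀ (w : {w : Fin (n+1) → ℤ × ℤ // P w}) (i : Fin (n+1)),
      (w.1 i).1 ∈ Set.Icc (-(n:ℤ)) (n:ℤ) ∧ (w.1 i).2 ∈ Set.Icc a b := by
    intro w i
    have hsaw := hP w.1 w.2
    have hb := X_bound hsaw i.val
    rw [X_eq w.1 (by omega)] at hb
    have hi : (⟨i.val, by omega⟩ : Fin (n+1)) = i := by ext; rfl
    rw [hi] at hb
    rw [abs_le] at hb
    have hstrip := hsaw.2.2.1 i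
    have hin : (i : ℕ) ≤ n := by omega
    constructor
    · simp only [Set.mem_Icc]
      have : (i : ℤ) ≤ (n : ℤ) := by exact_mod_cast hin
      omega
    · simp only [Set.mem_Icc]
      exact hstrip
  apply Finite.of_injective (fun (w : {w : Fin (n+1) → ℤ × ℤ // P w}) (i : Fin (n+1)) =>
    ((⟨(w.1 i).1, (key w i).1⟩ : Set.Icc (-(n:ℤ)) (n:ℤ)), (⟨(w.1 i).2, (key w i).2⟩ : Set.Icc a b)))
  intro w w' h
  apply Subtype.ext
  funext i
  have hi := congrFun h i
  simp only [Prod.mk.injEq, Subtype.mk.injEq] at hi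
  exact Prod.ext hi.1 hi.2


lemma lastMax_le (f : ℕ → ℤ) (i n : ℕ) : lastMax f i n ≤ n := by
  unfold lastMax
  split
  · exact (exists_lastMax f ‹_›).choose_spec.2.1
  · omega

lemma lastMin_le (f : ℕ → ℤ) (i n : ℕ) : lastMin f i n ≤ n := by
  unfold lastMin
  split
  · exact (exists_lastMin f ‹_›).choose_spec.2.1
  · omega

lemma X_natval {n : ℕ} (w : Fin (n+1) → ℤ × ℤ) (i : Fin (n+1)) : X n w i.val = (w i).1 := by
  rw [X_eq w (by omega)]

lemma Y_natval {n : ℕ} (w : Fin (n+1) → ℤ × ℤ) (i : Fin (n+1)) : Y n w i.val = (w i).2 := by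
  rw [Y_eq w (by omega)]

lemma X_last {n : ℕ} (w : Fin (n+1) → ℤ × ℤ) : X n w n = (w (Fin.last n)).1 := by
  rw [X_eq w le_rfl]; rfl

noncomputable def J1 (n : ℕ) (w : Fin (n+1) → ℤ × ℤ) : ℕ := lastMax (X n w) 0 n
noncomputable def J2 (n : ℕ) (w : Fin (n+1) → ℤ × ℤ) : ℕ := lastMin (X n w) (J1 n w) n
noncomputable def J3 (n : ℕ) (w : Fin (n+1) → ℤ × ℤ) : ℕ := lastMax (X n w) (J2 n w) n

lemma J1_le (n : ℕ) (w : Fin (n+1) → ℤ × ℤ) : J1 n w ≤ n := lastMax_le _ _ _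
lemma J2_le (n : ℕ) (w : Fin (n+1) → ℤ × ℤ) : J2 n w ≤ n := lastMin_le _ _ _
lemma J3_le (n : ℕ) (w : Fin (n+1) → ℤ × ℤ) : J3 n w ≤ n := lastMax_le _ _ _

noncomputable def fJ1 (n : ℕ) (w : Fin (n+1) → ℤ × ℤ) : Fin (n+1) :=
  ⟨J1 n w, Nat.lt_succ_of_le (J1_le n w)⟩
noncomputable def fJ2 (n : ℕ) (w : Fin (n+1) → ℤ × ℤ) : Fin (n+1) :=
  ⟨J2 n w, Nat.lt_succ_of_le (J2_le n w)⟩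
noncomputable def fJ3 (n : ℕ) (w : Fin (n+1) → ℤ × ℤ) : Fin (n+1) :=
  ⟨J3 n w, Nat.lt_succ_of_le (J3_le n w)⟩

lemma J1_spec (n : ℕ) (w : Fin (n+1) → ℤ × ℤ) :
    (∀ l, l ≤ n → X n w l ≤ X n w (J1 n w)) ∧
    (∀ l, J1 n w < l → l ≤ n → X n w l < X n w (J1 n w)) := by
  have h := lastMax_spec (X n w) (Nat.zero_le n)
  exact ⟨fun l hl => h.2.2.1 l (Nat.zero_le l) hl, h.2.2.2⟩

lemma J2_spec (n : ℕ) (w : Fin (n+1) → ℤ × ℤ) :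
    J1 n w ≤ J2 n w ∧
    (∀ l, J1 n w ≤ l → l ≤ n → X n w (J2 n w) ≤ X n w l) ∧
    (∀ l, J2 n w < l → l ≤ n → X n w (J2 n w) < X n w l) := by
  have h := lastMin_spec (X n w) (J1_le n w)
  exact ⟨h.1, h.2.2.1, h.2.2.2⟩

lemma J3_spec (n : ℕ) (w : Fin (n+1) → ℤ × ℤ) :
    J2 n w ≤ J3 n w ∧
    (∀ l, J2 n w ≤ l → l ≤ n → X n w l ≤ X n w (J3 n w)) ∧
    (∀ l, J3 n w < l → l ≤ n → X n w l < X n w (J3 n w)) := by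
  have h := lastMax_spec (X n w) (J2_le n w)
  exact ⟨h.1, h.2.2.1, h.2.2.2⟩

lemma X_fJ1 (n : ℕ) (w : Fin (n+1) → ℤ × ℤ) : X n w (J1 n w) = (w (fJ1 n w)).1 := by
  rw [X_eq w (J1_le n w)]; rfl

lemma X_fJ2 (n : ℕ) (w : Fin (n+1) → ℤ × ℤ) : X n w (J2 n w) = (w (fJ2 n w)).1 := by
  rw [X_eq w (J2_le n w)]; rfl

lemma X_fJ3 (n : ℕ) (w : Fin (n+1) → ℤ × ℤ) : X n w (J3 n w) = (w (fJ3 n w)).1 := by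
  rw [X_eq w (J3_le n w)]; rfl

/-- Case 0: the walk is already a bridge. -/
lemma bridge0 {n : ℕ} {w : Fin (n+1) → ℤ × ℤ} (hw : IsHalfSpace (-1) 2 n w)
    (h1 : J1 n w = n) : IsBridge (-1) 2 n w := by
  apply halfspace_bridge hw
  intro i
  have h := (J1_spec n w).1 i.val (by omega)
  rw [h1, X_natval, X_last] at h
  exact h

lemma hmaxF1 {n : ℕ} (w : Fin (n+1) → ℤ × ℤ) (i : Fin (n+1)) :
    (w i).1 ≤ (w (fJ1 n w)).1 := by
  have h := (J1_spec n w).1 i.val (by omega)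
  rw [X_natval] at h
  rw [X_fJ1] at h
  exact h

lemma hlastF1 {n : ℕ} (w : Fin (n+1) → ℤ × ℤ) (i : Fin (n+1)) (hi : fJ1 n w < i) :
    (w i).1 < (w (fJ1 n w)).1 := by
  have h := (J1_spec n w).2 i.val (by exact hi) (by omega)
  rw [X_natval] at h
  rw [X_fJ1] at h
  exact h

/-- The once-folded walk is a half-space walk (unconditionally). -/
lemma hs1 {n : ℕ} {w : Fin (n+1) → ℤ × ℤ} (hw : IsHalfSpace (-1) 2 n w) :
    IsHalfSpace (-1) 2 n (foldAt n w (fJ1 n w)) :=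
  fold_halfspace hw (hmaxF1 w) (hlastF1 w)

/-- Case 1: one fold gives a bridge. -/
lemma bridge1 {n : ℕ} {w : Fin (n+1) → ℤ × ℤ} (hw : IsHalfSpace (-1) 2 n w)
    (h1 : J1 n w ≠ n) (h2 : J2 n w = n) :
    IsBridge (-1) 2 n (foldAt n w (fJ1 n w)) := by
  apply halfspace_bridge (hs1 hw)
  intro i
  have hlastgt : fJ1 n w < Fin.last n := by
    rw [Fin.lt_def]
    simp only [fJ1, Fin.val_last]
    have := J1_le n w; omega
  rw [foldAt_of_gt hlastgt]
  have hXn_le : X n w n ≤ X n w (J1 n w) := (J1_spec n w).1 n le_rfl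
  rw [X_last, X_fJ1] at hXn_le
  by_cases hij : i ≤ fJ1 n w
  · rw [foldAt_of_le hij]
    have h3 := hmaxF1 w i
    simp only
    omega
  · rw [not_le] at hij
    rw [foldAt_of_gt hij]
    simp only
    have h4 := (J2_spec n w).2.1 i.val (by exact le_of_lt hij) (by omega)
    rw [h2, X_natval, X_last] at h4
    omega


lemma J1_lt_J2 {n : ℕ} {w : Fin (n+1) → ℤ × ℤ} (h1 : J1 n w ≠ n) : J1 n w < J2 n w := by
  have hsa := J1_spec n w
  have hsb := J2_spec n w
  have hle := J1_le n w
  have ha := hsa.2 (J1 n w + 1) (by omega) (by omega)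
  have hb := hsb.2.1 (J1 n w + 1) (by omega) (by omega)
  rcases eq_or_lt_of_le hsb.1 with he | h
  · rw [← he] at hb; omega
  · exact h

lemma J2_lt_J3 {n : ℕ} {w : Fin (n+1) → ℤ × ℤ} (h2 : J2 n w ≠ n) : J2 n w < J3 n w := by
  have hsb := J2_spec n w
  have hsc := J3_spec n w
  have hle := J2_le n w
  have ha := hsb.2.2 (J2 n w + 1) (by omega) (by omega)
  have hb := hsc.2.1 (J2 n w + 1) (by omega) (by omega)
  rcases eq_or_lt_of_le hsc.1 with he | h
  · rw [← he] at hb; omega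
  · exact h

lemma crossing_heights {n : ℕ} {w : Fin (n+1) → ℤ × ℤ} (hw : IsSAW (-1) 2 n w) {c : ℤ}
    {t t' : ℕ} (h1 : t < t') (h2 : t' + 1 ≤ n)
    (ht : (X n w t = c ∧ X n w (t+1) = c+1) ∨ (X n w t = c+1 ∧ X n w (t+1) = c))
    (ht' : (X n w t' = c ∧ X n w (t'+1) = c+1) ∨ (X n w t' = c+1 ∧ X n w (t'+1) = c)) :
    Y n w t ≠ Y n w t' := by
  intro heq
  have hYt : Y n w (t+1) = Y n w t := by
    have hs := step_eq hw (show t < n by omega)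
    have habs : |X n w (t+1) - X n w t| = 1 := by
      rcases ht with ⟨a,b⟩|⟨a,b⟩ <;> rw [a,b] <;> simp
    rw [Int.abs_eq_natAbs, Int.abs_eq_natAbs] at hs
    rw [Int.abs_eq_natAbs] at habs
    omega
  have hYt' : Y n w (t'+1) = Y n w t' := by
    have hs := step_eq hw (show t' < n by omega)
    have habs : |X n w (t'+1) - X n w t'| = 1 := by
      rcases ht' with ⟨a,b⟩|⟨a,b⟩ <;> rw [a,b] <;> simp
    rw [Int.abs_eq_natAbs, Int.abs_eq_natAbs] at hs
    rw [Int.abs_eq_natAbs] at habs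
    omega
  have hinj := hw.2.1
  have px1 : (w ⟨t, by omega⟩).1 = X n w t := (X_eq w (by omega)).symm
  have px2 : (w ⟨t+1, by omega⟩).1 = X n w (t+1) := (X_eq w (by omega)).symm
  have px4 : (w ⟨t'+1, by omega⟩).1 = X n w (t'+1) := (X_eq w (by omega)).symm
  have py1 : (w ⟨t, by omega⟩).2 = Y n w t := (Y_eq w (by omega)).symm
  have py2 : (w ⟨t+1, by omega⟩).2 = Y n w (t+1) := (Y_eq w (by omega)).symm
  have py4 : (w ⟨t'+1, by omega⟩).2 = Y n w (t'+1) := (Y_eq w (by omega)).symm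
  have e1 : w ⟨t+1, by omega⟩ = w ⟨t'+1, by omega⟩ ∨ w ⟨t, by omega⟩ = w ⟨t'+1, by omega⟩ := by
    rcases ht with ⟨a,b⟩|⟨a,b⟩ <;> rcases ht' with ⟨a',b'⟩|⟨a',b'⟩
    · exact Or.inl (Prod.ext (by omega) (by omega))
    · exact Or.inr (Prod.ext (by omega) (by omega))
    · exact Or.inr (Prod.ext (by omega) (by omega))
    · exact Or.inl (Prod.ext (by omega) (by omega))
  rcases e1 with h | h
  · have := hinj h
    simp only [Fin.mk.injEq] at this
    omega
  · have := hinj h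
    simp only [Fin.mk.injEq] at this
    omega

lemma key3 {n : ℕ} {w : Fin (n+1) → ℤ × ℤ} (hw : IsHalfSpace (-1) 2 n w)
    (h1 : J1 n w ≠ n) (h2 : J2 n w ≠ n) (h3 : J3 n w ≠ n) :
    ∀ l, J3 n w ≤ l → l ≤ n → X n w n ≤ X n w l := by
  set J4 := lastMin (X n w) (J3 n w) n with hJ4def
  have hs4 := lastMin_spec (X n w) (J3_le n w)
  rw [← hJ4def] at hs4
  have hJ4le : J4 ≤ n := hs4.2.1
  by_cases hJ4 : J4 = n
  · intro l hl1 hl2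
    have h := hs4.2.2.1 l hl1 hl2
    rw [hJ4] at h
    exact h
  · exfalso
    have hXstep := X_step hw.1
    have hsa := J1_spec n w
    have hsb := J2_spec n w
    have hsc := J3_spec n w
    have hJ12 := J1_lt_J2 h1
    have hJ23 := J2_lt_J3 h2
    have hJ1le := J1_le n w
    have hJ2le := J2_le n w
    have hJ3le := J3_le n w
    have hJ34 : J3 n w < J4 := by
      have ha := hsc.2.2 (J3 n w + 1) (by omega) (by omega)
      have hb := hs4.2.2.1 (J3 n w + 1) (by omega) (by omega)
      rcases eq_or_lt_of_le hs4.1 with he | h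
      · rw [← he] at hb; omega
      · exact h
    have f0 : X n w 0 = 0 := X_zero hw.1
    have fm2pos : 1 ≤ X n w (J2 n w) := X_pos hw (by omega) hJ2le
    have fm2m4 : X n w (J2 n w) ≤ X n w J4 := hsb.2.1 J4 (by omega) hJ4le
    have fm4M3 : X n w J4 < X n w (J3 n w) := by
      have ha := hs4.2.2.1 (J3 n w + 1) (by omega) (by omega)
      have hb := hsc.2.2 (J3 n w + 1) (by omega) (by omega)
      omega
    have fM3M1 : X n w (J3 n w) < X n w (J1 n w) := hsa.2 (J3 n w) (by omega) hJ3le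
    have fXn : X n w J4 < X n w n := hs4.2.2.2 n (by omega) le_rfl
    -- five crossings of the vertical line between X J4 and X J4 + 1
    obtain ⟨t1, ht1a, ht1b, ht1c, ht1d⟩ := cross_up' (X n w) hXstep
      (show 0 ≤ J1 n w by omega) (show X n w 0 ≤ X n w J4 by omega)
      (show X n w J4 + 1 ≤ X n w (J1 n w) by omega)
    obtain ⟨t2, ht2a, ht2b, ht2c, ht2d⟩ := cross_down' (X n w) hXstep
      (show J1 n w ≤ J2 n w by omega)
      (show X n w J4 + 1 ≤ X n w (J1 n w) by omega)
      (show X n w (J2 n w) ≤ X n w J4 by omega)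
    obtain ⟨t3, ht3a, ht3b, ht3c, ht3d⟩ := cross_up' (X n w) hXstep
      (show J2 n w ≤ J3 n w by omega)
      (show X n w (J2 n w) ≤ X n w J4 by omega)
      (show X n w J4 + 1 ≤ X n w (J3 n w) by omega)
    obtain ⟨t4, ht4a, ht4b, ht4c, ht4d⟩ := cross_down' (X n w) hXstep
      (show J3 n w ≤ J4 by omega)
      (show X n w J4 + 1 ≤ X n w (J3 n w) by omega)
      (show X n w J4 ≤ X n w J4 by omega)
    obtain ⟨t5, ht5a, ht5b, ht5c, ht5d⟩ := cross_up' (X n w) hXstep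
      (show J4 ≤ n by omega) (show X n w J4 ≤ X n w J4 by omega)
      (show X n w J4 + 1 ≤ X n w n by omega)
    have hYb : ∀ k, k ≤ n → -1 ≤ Y n w k ∧ Y n w k ≤ 2 := by
      intro k hk
      rw [Y_eq w hk]
      exact hw.1.2.2.1 _
    have m1 : (X n w t1 = X n w J4 ∧ X n w (t1+1) = X n w J4 + 1) ∨
        (X n w t1 = X n w J4 + 1 ∧ X n w (t1+1) = X n w J4) := Or.inl ⟨ht1c, ht1d⟩
    have m2 : (X n w t2 = X n w J4 ∧ X n w (t2+1) = X n w J4 + 1) ∨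
        (X n w t2 = X n w J4 + 1 ∧ X n w (t2+1) = X n w J4) := Or.inr ⟨ht2c, ht2d⟩
    have m3 : (X n w t3 = X n w J4 ∧ X n w (t3+1) = X n w J4 + 1) ∨
        (X n w t3 = X n w J4 + 1 ∧ X n w (t3+1) = X n w J4) := Or.inl ⟨ht3c, ht3d⟩
    have m4 : (X n w t4 = X n w J4 ∧ X n w (t4+1) = X n w J4 + 1) ∨
        (X n w t4 = X n w J4 + 1 ∧ X n w (t4+1) = X n w J4) := Or.inr ⟨ht4c, ht4d⟩
    have m5 : (X n w t5 = X n w J4 ∧ X n w (t5+1) = X n w J4 + 1) ∨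
        (X n w t5 = X n w J4 + 1 ∧ X n w (t5+1) = X n w J4) := Or.inl ⟨ht5c, ht5d⟩
    have d12 := crossing_heights hw.1 (show t1 < t2 by omega) (show t2+1 ≤ n by omega) m1 m2
    have d13 := crossing_heights hw.1 (show t1 < t3 by omega) (show t3+1 ≤ n by omega) m1 m3
    have d14 := crossing_heights hw.1 (show t1 < t4 by omega) (show t4+1 ≤ n by omega) m1 m4
    have d15 := crossing_heights hw.1 (show t1 < t5 by omega) (show t5+1 ≤ n by omega) m1 m5
    have d23 := crossing_heights hw.1 (show t2 < t3 by omega) (show t3+1 ≤ n by omega) m2 m3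
    have d24 := crossing_heights hw.1 (show t2 < t4 by omega) (show t4+1 ≤ n by omega) m2 m4
    have d25 := crossing_heights hw.1 (show t2 < t5 by omega) (show t5+1 ≤ n by omega) m2 m5
    have d34 := crossing_heights hw.1 (show t3 < t4 by omega) (show t4+1 ≤ n by omega) m3 m4
    have d35 := crossing_heights hw.1 (show t3 < t5 by omega) (show t5+1 ≤ n by omega) m3 m5
    have d45 := crossing_heights hw.1 (show t4 < t5 by omega) (show t5+1 ≤ n by omega) m4 m5
    have hy1 := hYb t1 (by omega)
    have hy2 := hYb t2 (by omega)
    have hy3 := hYb t3 (by omega)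
    have hy4 := hYb t4 (by omega)
    have hy5 := hYb t5 (by omega)
    omega



lemma fgt12 {n : ℕ} {w : Fin (n+1) → ℤ × ℤ} (h1 : J1 n w ≠ n) : fJ1 n w < fJ2 n w := by
  rw [Fin.lt_def]; exact J1_lt_J2 h1

lemma fgt23 {n : ℕ} {w : Fin (n+1) → ℤ × ℤ} (h2 : J2 n w ≠ n) : fJ2 n w < fJ3 n w := by
  rw [Fin.lt_def]; exact J2_lt_J3 h2

lemma hmaxF2 {n : ℕ} {w : Fin (n+1) → ℤ × ℤ} (h1 : J1 n w ≠ n) (i : Fin (n+1)) :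
    (foldAt n w (fJ1 n w) i).1 ≤ (foldAt n w (fJ1 n w) (fJ2 n w)).1 := by
  have hgt12 := fgt12 h1
  have hv1 : (fJ1 n w).val = J1 n w := rfl
  have hv2 : (fJ2 n w).val = J2 n w := rfl
  have hv3 : (fJ3 n w).val = J3 n w := rfl
  rw [foldAt_of_gt hgt12]
  by_cases hi : i ≤ fJ1 n w
  · rw [foldAt_of_le hi]
    have a1 := hmaxF1 w i
    have a2 := (J1_spec n w).1 (J2 n w) (J2_le n w)
    rw [X_fJ1, X_fJ2] at a2
    simp only
    omega
  · rw [not_le] at hi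
    rw [foldAt_of_gt hi]
    have a3 := (J2_spec n w).2.1 i.val (by exact le_of_lt hi) (by omega)
    rw [X_natval, X_fJ2] at a3
    simp only
    omega

lemma hlastF2 {n : ℕ} {w : Fin (n+1) → ℤ × ℤ} (h1 : J1 n w ≠ n) (i : Fin (n+1))
    (hi : fJ2 n w < i) :
    (foldAt n w (fJ1 n w) i).1 < (foldAt n w (fJ1 n w) (fJ2 n w)).1 := by
  have hgt12 := fgt12 h1
  have hv1 : (fJ1 n w).val = J1 n w := rfl
  have hv2 : (fJ2 n w).val = J2 n w := rfl
  have hv3 : (fJ3 n w).val = J3 n w := rfl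
  rw [foldAt_of_gt hgt12, foldAt_of_gt (lt_trans hgt12 hi)]
  have a3 := (J2_spec n w).2.2 i.val (by exact hi) (by omega)
  rw [X_natval, X_fJ2] at a3
  simp only
  omega

lemma hs2 {n : ℕ} {w : Fin (n+1) → ℤ × ℤ} (hw : IsHalfSpace (-1) 2 n w) (h1 : J1 n w ≠ n) :
    IsHalfSpace (-1) 2 n (foldAt n (foldAt n w (fJ1 n w)) (fJ2 n w)) :=
  fold_halfspace (hs1 hw) (hmaxF2 h1) (hlastF2 h1)

/-- Case 2: two folds give a bridge. -/
lemma bridge2 {n : ℕ} {w : Fin (n+1) → ℤ × ℤ} (hw : IsHalfSpace (-1) 2 n w)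
    (h1 : J1 n w ≠ n) (h2 : J2 n w ≠ n) (h3 : J3 n w = n) :
    IsBridge (-1) 2 n (foldAt n (foldAt n w (fJ1 n w)) (fJ2 n w)) := by
  apply halfspace_bridge (hs2 hw h1)
  intro i
  have hgt12 := fgt12 h1
  have hv1 : (fJ1 n w).val = J1 n w := rfl
  have hv2 : (fJ2 n w).val = J2 n w := rfl
  have hv3 : (fJ3 n w).val = J3 n w := rfl
  have hJ2lt : fJ2 n w < Fin.last n := by
    rw [Fin.lt_def]
    have := J2_le n w
    simp only [Fin.val_last]
    omega
  have hJ1lt : fJ1 n w < Fin.last n := lt_trans hgt12 hJ2lt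
  rw [foldAt_of_gt hJ2lt]
  have e1 : (foldAt n w (fJ1 n w) (fJ2 n w)).1 = 2*(w (fJ1 n w)).1 - (w (fJ2 n w)).1 := by
    rw [foldAt_of_gt hgt12]
  have e2 : (foldAt n w (fJ1 n w) (Fin.last n)).1 = 2*(w (fJ1 n w)).1 - (w (Fin.last n)).1 := by
    rw [foldAt_of_gt hJ1lt]
  have f1 : (w (fJ2 n w)).1 ≤ (w (Fin.last n)).1 := by
    have := (J2_spec n w).2.1 n (by omega) le_rfl
    rw [X_fJ2, X_last] at this
    exact this
  by_cases hi : i ≤ fJ2 n w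
  · rw [foldAt_of_le hi]
    have a1 := hmaxF2 h1 i
    rw [e1] at a1
    simp only
    omega
  · rw [not_le] at hi
    rw [foldAt_of_gt hi]
    have ei : (foldAt n w (fJ1 n w) i).1 = 2*(w (fJ1 n w)).1 - (w i).1 := by
      rw [foldAt_of_gt (lt_trans hgt12 hi)]
    have a2 : (w i).1 ≤ (w (Fin.last n)).1 := by
      have := (J3_spec n w).2.1 i.val (by exact le_of_lt hi) (by omega)
      rw [h3, X_natval, X_last] at this
      exact this
    simp only
    omega

lemma hmaxF3 {n : ℕ} {w : Fin (n+1) → ℤ × ℤ} (h1 : J1 n w ≠ n) (h2 : J2 n w ≠ n)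
    (i : Fin (n+1)) :
    (foldAt n (foldAt n w (fJ1 n w)) (fJ2 n w) i).1 ≤
      (foldAt n (foldAt n w (fJ1 n w)) (fJ2 n w) (fJ3 n w)).1 := by
  have hgt12 := fgt12 h1
  have hv1 : (fJ1 n w).val = J1 n w := rfl
  have hv2 : (fJ2 n w).val = J2 n w := rfl
  have hv3 : (fJ3 n w).val = J3 n w := rfl
  have hgt23 := fgt23 (w := w) h2
  have hv1 : (fJ1 n w).val = J1 n w := rfl
  have hv2 : (fJ2 n w).val = J2 n w := rfl
  have hv3 : (fJ3 n w).val = J3 n w := rfl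
  rw [foldAt_of_gt hgt23]
  have e1 : (foldAt n w (fJ1 n w) (fJ2 n w)).1 = 2*(w (fJ1 n w)).1 - (w (fJ2 n w)).1 := by
    rw [foldAt_of_gt hgt12]
  have e3 : (foldAt n w (fJ1 n w) (fJ3 n w)).1 = 2*(w (fJ1 n w)).1 - (w (fJ3 n w)).1 := by
    rw [foldAt_of_gt (lt_trans hgt12 hgt23)]
  by_cases hi : i ≤ fJ2 n w
  · rw [foldAt_of_le hi]
    have a1 := hmaxF2 h1 i
    have a2 := hmaxF2 h1 (fJ3 n w)
    rw [e1] at a1 a2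
    rw [e3] at a2
    simp only
    omega
  · rw [not_le] at hi
    rw [foldAt_of_gt hi]
    have ei : (foldAt n w (fJ1 n w) i).1 = 2*(w (fJ1 n w)).1 - (w i).1 := by
      rw [foldAt_of_gt (lt_trans hgt12 hi)]
    have a3 : (w i).1 ≤ (w (fJ3 n w)).1 := by
      have := (J3_spec n w).2.1 i.val (by exact le_of_lt hi) (by omega)
      rw [X_natval, X_fJ3] at this
      exact this
    simp only
    omega

lemma hlastF3 {n : ℕ} {w : Fin (n+1) → ℤ × ℤ} (h1 : J1 n w ≠ n) (h2 : J2 n w ≠ n)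
    (i : Fin (n+1)) (hi : fJ3 n w < i) :
    (foldAt n (foldAt n w (fJ1 n w)) (fJ2 n w) i).1 <
      (foldAt n (foldAt n w (fJ1 n w)) (fJ2 n w) (fJ3 n w)).1 := by
  have hgt12 := fgt12 h1
  have hv1 : (fJ1 n w).val = J1 n w := rfl
  have hv2 : (fJ2 n w).val = J2 n w := rfl
  have hv3 : (fJ3 n w).val = J3 n w := rfl
  have hgt23 := fgt23 (w := w) h2
  have hv1 : (fJ1 n w).val = J1 n w := rfl
  have hv2 : (fJ2 n w).val = J2 n w := rfl
  have hv3 : (fJ3 n w).val = J3 n w := rfl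
  rw [foldAt_of_gt hgt23, foldAt_of_gt (lt_trans hgt23 hi)]
  have ei : (foldAt n w (fJ1 n w) i).1 = 2*(w (fJ1 n w)).1 - (w i).1 := by
    rw [foldAt_of_gt (lt_trans hgt12 (lt_trans hgt23 hi))]
  have e3 : (foldAt n w (fJ1 n w) (fJ3 n w)).1 = 2*(w (fJ1 n w)).1 - (w (fJ3 n w)).1 := by
    rw [foldAt_of_gt (lt_trans hgt12 hgt23)]
  have a3 : (w i).1 < (w (fJ3 n w)).1 := by
    have := (J3_spec n w).2.2 i.val (by exact hi) (by omega)
    rw [X_natval, X_fJ3] at this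
    exact this
  simp only
  omega

lemma hs3 {n : ℕ} {w : Fin (n+1) → ℤ × ℤ} (hw : IsHalfSpace (-1) 2 n w)
    (h1 : J1 n w ≠ n) (h2 : J2 n w ≠ n) :
    IsHalfSpace (-1) 2 n
      (foldAt n (foldAt n (foldAt n w (fJ1 n w)) (fJ2 n w)) (fJ3 n w)) :=
  fold_halfspace (hs2 hw h1) (hmaxF3 h1 h2) (hlastF3 h1 h2)

/-- Case 3: three folds give a bridge. -/
lemma bridge3 {n : ℕ} {w : Fin (n+1) → ℤ × ℤ} (hw : IsHalfSpace (-1) 2 n w)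
    (h1 : J1 n w ≠ n) (h2 : J2 n w ≠ n) (h3 : J3 n w ≠ n) :
    IsBridge (-1) 2 n
      (foldAt n (foldAt n (foldAt n w (fJ1 n w)) (fJ2 n w)) (fJ3 n w)) := by
  apply halfspace_bridge (hs3 hw h1 h2)
  intro i
  have hgt12 := fgt12 h1
  have hv1 : (fJ1 n w).val = J1 n w := rfl
  have hv2 : (fJ2 n w).val = J2 n w := rfl
  have hv3 : (fJ3 n w).val = J3 n w := rfl
  have hgt23 := fgt23 (w := w) h2
  have hv1 : (fJ1 n w).val = J1 n w := rfl
  have hv2 : (fJ2 n w).val = J2 n w := rfl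
  have hv3 : (fJ3 n w).val = J3 n w := rfl
  have hJ3lt : fJ3 n w < Fin.last n := by
    rw [Fin.lt_def]
    have := J3_le n w
    simp only [Fin.val_last]
    omega
  have hJ2lt : fJ2 n w < Fin.last n := lt_trans hgt23 hJ3lt
  have hJ1lt : fJ1 n w < Fin.last n := lt_trans hgt12 hJ2lt
  rw [foldAt_of_gt hJ3lt]
  by_cases hi : i ≤ fJ3 n w
  · rw [foldAt_of_le hi]
    have a1 := hmaxF3 h1 h2 i
    have a2 := hmaxF3 h1 h2 (Fin.last n)
    simp only
    omega
  · rw [not_le] at hi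
    rw [foldAt_of_gt hi]
    have ei : (foldAt n (foldAt n w (fJ1 n w)) (fJ2 n w) i).1 =
        2*(foldAt n w (fJ1 n w) (fJ2 n w)).1 - (foldAt n w (fJ1 n w) i).1 := by
      rw [foldAt_of_gt (lt_trans hgt23 hi)]
    have elast : (foldAt n (foldAt n w (fJ1 n w)) (fJ2 n w) (Fin.last n)).1 =
        2*(foldAt n w (fJ1 n w) (fJ2 n w)).1 - (foldAt n w (fJ1 n w) (Fin.last n)).1 := by
      rw [foldAt_of_gt hJ2lt]
    have ei' : (foldAt n w (fJ1 n w) i).1 = 2*(w (fJ1 n w)).1 - (w i).1 := by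
      rw [foldAt_of_gt (lt_trans hgt12 (lt_trans hgt23 hi))]
    have elast' : (foldAt n w (fJ1 n w) (Fin.last n)).1 =
        2*(w (fJ1 n w)).1 - (w (Fin.last n)).1 := by
      rw [foldAt_of_gt hJ1lt]
    have a3 : (w (Fin.last n)).1 ≤ (w i).1 := by
      have := key3 hw h1 h2 h3 i.val (by exact le_of_lt hi) (by omega)
      rw [X_natval, X_last] at this
      exact this
    simp only
    omega



/-- Index data recording where the folds happened. -/
abbrev IndexData (n : ℕ) : Type :=
  Unit ⊕ Fin n ⊕ Fin n × Fin n ⊕ Fin n × Fin n × Fin n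

noncomputable def Fmap (n : ℕ) :
    {w : Fin (n+1) → ℤ × ℤ // IsHalfSpace (-1) 2 n w} →
      IndexData n × {w : Fin (n+1) → ℤ × ℤ // IsBridge (-1) 2 n w} := fun p =>
  if h1 : J1 n p.1 = n then (Sum.inl (), ⟨p.1, bridge0 p.2 h1⟩)
  else if h2 : J2 n p.1 = n then
    (Sum.inr (Sum.inl ⟨J1 n p.1, by have := J1_le n p.1; omega⟩),
      ⟨_, bridge1 p.2 h1 h2⟩)
  else if h3 : J3 n p.1 = n then
    (Sum.inr (Sum.inr (Sum.inl (⟨J1 n p.1, by have := J1_le n p.1; omega⟩,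
      ⟨J2 n p.1, by have := J2_le n p.1; omega⟩))),
      ⟨_, bridge2 p.2 h1 h2 h3⟩)
  else
    (Sum.inr (Sum.inr (Sum.inr (⟨J1 n p.1, by have := J1_le n p.1; omega⟩,
      ⟨J2 n p.1, by have := J2_le n p.1; omega⟩,
      ⟨J3 n p.1, by have := J3_le n p.1; omega⟩))),
      ⟨_, bridge3 p.2 h1 h2 h3⟩)

lemma Fmap_inj (n : ℕ) : Function.Injective (Fmap n) := by
  rintro ⟨w, hw⟩ ⟨w', hw'⟩ h
  unfold Fmap at h
  apply Subtype.ext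
  simp only
  split_ifs at h with h1 h1' h2 h2' h3 h3' <;>
    simp only [Prod.mk.injEq, Sum.inl.injEq, Sum.inr.injEq, Subtype.mk.injEq,
      Fin.mk.injEq, reduceCtorEq, false_and, and_false] at h
  · exact h.2
  · -- case 1 for both
    obtain ⟨hJ, hB⟩ := h
    have hfJ : fJ1 n w = fJ1 n w' := Fin.ext hJ
    calc w = foldAt n (foldAt n w (fJ1 n w)) (fJ1 n w) := (foldAt_foldAt w _).symm
      _ = foldAt n (foldAt n w' (fJ1 n w')) (fJ1 n w) := by rw [hB]
      _ = w' := by rw [hfJ, foldAt_foldAt]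
  · -- case 2 for both
    obtain ⟨⟨hJa, hJb⟩, hB⟩ := h
    have hfJa : fJ1 n w = fJ1 n w' := Fin.ext hJa
    have hfJb : fJ2 n w = fJ2 n w' := Fin.ext hJb
    have step1 : foldAt n w (fJ1 n w) = foldAt n w' (fJ1 n w') := by
      calc foldAt n w (fJ1 n w)
          = foldAt n (foldAt n (foldAt n w (fJ1 n w)) (fJ2 n w)) (fJ2 n w) :=
            (foldAt_foldAt _ _).symm
        _ = foldAt n (foldAt n (foldAt n w' (fJ1 n w')) (fJ2 n w')) (fJ2 n w) := by rw [hB]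
        _ = foldAt n w' (fJ1 n w') := by rw [hfJb, foldAt_foldAt]
    calc w = foldAt n (foldAt n w (fJ1 n w)) (fJ1 n w) := (foldAt_foldAt w _).symm
      _ = foldAt n (foldAt n w' (fJ1 n w')) (fJ1 n w) := by rw [step1]
      _ = w' := by rw [hfJa, foldAt_foldAt]
  · -- case 3 for both
    obtain ⟨⟨hJa, hJb, hJc⟩, hB⟩ := h
    have hfJa : fJ1 n w = fJ1 n w' := Fin.ext hJa
    have hfJb : fJ2 n w = fJ2 n w' := Fin.ext hJb
    have hfJc : fJ3 n w = fJ3 n w' := Fin.ext hJc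
    have step2 : foldAt n (foldAt n w (fJ1 n w)) (fJ2 n w)
        = foldAt n (foldAt n w' (fJ1 n w')) (fJ2 n w') := by
      calc foldAt n (foldAt n w (fJ1 n w)) (fJ2 n w)
          = foldAt n (foldAt n (foldAt n (foldAt n w (fJ1 n w)) (fJ2 n w)) (fJ3 n w))
              (fJ3 n w) := (foldAt_foldAt _ _).symm
        _ = foldAt n (foldAt n (foldAt n (foldAt n w' (fJ1 n w')) (fJ2 n w')) (fJ3 n w'))
              (fJ3 n w) := by rw [hB]
        _ = _ := by rw [hfJc, foldAt_foldAt]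
    have step1 : foldAt n w (fJ1 n w) = foldAt n w' (fJ1 n w') := by
      calc foldAt n w (fJ1 n w)
          = foldAt n (foldAt n (foldAt n w (fJ1 n w)) (fJ2 n w)) (fJ2 n w) :=
            (foldAt_foldAt _ _).symm
        _ = foldAt n (foldAt n (foldAt n w' (fJ1 n w')) (fJ2 n w')) (fJ2 n w) := by rw [step2]
        _ = foldAt n w' (fJ1 n w') := by rw [hfJb, foldAt_foldAt]
    calc w = foldAt n (foldAt n w (fJ1 n w)) (fJ1 n w) := (foldAt_foldAt w _).symm
      _ = foldAt n (foldAt n w' (fJ1 n w')) (fJ1 n w) := by rw [step1]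
      _ = w' := by rw [hfJa, foldAt_foldAt]

end SWaux

/-- For all `n ≥ 0`, `h_{[−1,2],n} ≤ (1 + n + n² + n³) · b_{[−1,2],n}`. -/
theorem stmt_9 (n : ℕ) :
    numHalfSpace (-1) 2 n ≤ (1 + n + n ^ 2 + n ^ 3) * numBridge (-1) 2 n := by
  haveI : Finite {w : Fin (n+1) → ℤ × ℤ // IsBridge (-1) 2 n w} :=
    SWaux.finite_walks (-1) 2 n _ (fun w h => h.1)
  have hle := Nat.card_le_card_of_injective _ (SWaux.Fmap_inj n)
  have hprod : Nat.card (SWaux.IndexData n × {w : Fin (n+1) → ℤ × ℤ // IsBridge (-1) 2 n w})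
      = Nat.card (SWaux.IndexData n) * Nat.card {w : Fin (n+1) → ℤ × ℤ // IsBridge (-1) 2 n w} :=
    Nat.card_prod _ _
  have hidx : Nat.card (SWaux.IndexData n) = 1 + n + n ^ 2 + n ^ 3 := by
    simp [Nat.card_eq_fintype_card]
    ring
  calc numHalfSpace (-1) 2 n
      ≤ Nat.card (SWaux.IndexData n × {w : Fin (n+1) → ℤ × ℤ // IsBridge (-1) 2 n w}) := hle
    _ = (1 + n + n ^ 2 + n ^ 3) * numBridge (-1) 2 n := by
        rw [hprod, hidx]; rfl
end

section
/- For every integer n ≥ 1, the number of n-step self-avoiding walks on the lattice strip ℤ × {−1,0,1} satisfies c_{[−1,1],n} ≤ b_{[−1,1],n+1} · ((n+1) + 2(n+1)² + 3(n+1)³ + 2(n+1)⁴ + (n+1)⁵), where b_{[−1,1],n+1} is the number of (n+1)-step bridges on ℤ × {−1,0,1}. -/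
open Filter Finset

attribute [local instance] Classical.propDecidable

namespace Stmt13

noncomputable def Rop (i : ℕ) (u : ℕ → ℤ × ℤ) : ℕ → ℤ × ℤ := fun j =>
  if j ≤ i then u j else (2 * (u i).1 - (u j).1, (u j).2)

noncomputable def Lop (i : ℕ) (u : ℕ → ℤ × ℤ) : ℕ → ℤ × ℤ := fun j =>
  if i ≤ j then u j else (2 * (u i).1 - (u j).1, (u j).2)

noncomputable def prep (u : ℕ → ℤ × ℤ) : ℕ → ℤ × ℤ := fun j =>
  if j = 0 then ((u 0).1 - 1, (u 0).2) else u (j - 1)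

noncomputable def unprep (u : ℕ → ℤ × ℤ) : ℕ → ℤ × ℤ := fun j => u (j + 1)

noncomputable def normz (u : ℕ → ℤ × ℤ) : ℕ → ℤ × ℤ := fun j => u j - u 0

noncomputable def undoL (dL l1 l2 l3 : ℕ) (u : ℕ → ℤ × ℤ) : ℕ → ℤ × ℤ :=
  if dL = 0 then u else if dL = 1 then Lop l1 u else
  if dL = 2 then Lop l1 (Lop l2 u) else Lop l1 (Lop l2 (Lop l3 u))

noncomputable def undoR (dR r1 r2 : ℕ) (u : ℕ → ℤ × ℤ) : ℕ → ℤ × ℤ :=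
  if dR = 0 then u else if dR = 1 then Rop r1 u else Rop r1 (Rop r2 u)

noncomputable def decode (u : ℕ → ℤ × ℤ) (dL l1 l2 l3 dR r1 r2 : ℕ) : ℕ → ℤ × ℤ :=
  normz (undoL dL l1 l2 l3 (unprep (undoR dR r1 r2 u)))

lemma Rop_self (i : ℕ) (u : ℕ → ℤ × ℤ) : Rop i u i = u i := by simp [Rop]

lemma Lop_self (i : ℕ) (u : ℕ → ℤ × ℤ) : Lop i u i = u i := by simp [Lop]

lemma Rop_Rop (i : ℕ) (u : ℕ → ℤ × ℤ) : Rop i (Rop i u) = u := by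
  funext j
  by_cases h : j ≤ i
  · simp [Rop, h]
  · simp only [Rop, if_neg h, if_pos (le_refl i)]
    have h2 : 2 * (u i).1 - (2 * (u i).1 - (u j).1) = (u j).1 := by ring
    rw [h2, Prod.mk.eta]

lemma Lop_Lop (i : ℕ) (u : ℕ → ℤ × ℤ) : Lop i (Lop i u) = u := by
  funext j
  by_cases h : i ≤ j
  · simp [Lop, h]
  · simp only [Lop, if_neg h, if_pos (le_refl i)]
    have h2 : 2 * (u i).1 - (2 * (u i).1 - (u j).1) = (u j).1 := by ring
    rw [h2, Prod.mk.eta]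

lemma Rop_sub (i : ℕ) (u : ℕ → ℤ × ℤ) (c : ℤ × ℤ) :
    Rop i (fun j => u j - c) = fun j => Rop i u j - c := by
  funext j
  by_cases h : j ≤ i
  · simp [Rop, h]
  · simp only [Rop, if_neg h, Prod.ext_iff, Prod.fst_sub, Prod.snd_sub]
    constructor
    · ring
    · trivial

lemma Lop_sub (i : ℕ) (u : ℕ → ℤ × ℤ) (c : ℤ × ℤ) :
    Lop i (fun j => u j - c) = fun j => Lop i u j - c := by
  funext j
  by_cases h : i ≤ j
  · simp [Lop, h]
  · simp only [Lop, if_neg h, Prod.ext_iff, Prod.fst_sub, Prod.snd_sub]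
    constructor
    · ring
    · trivial

lemma undoL_sub (dL l1 l2 l3 : ℕ) (u : ℕ → ℤ × ℤ) (c : ℤ × ℤ) :
    undoL dL l1 l2 l3 (fun j => u j - c) = fun j => undoL dL l1 l2 l3 u j - c := by
  unfold undoL
  split_ifs <;> simp only [Lop_sub]

lemma undoR_sub (dR r1 r2 : ℕ) (u : ℕ → ℤ × ℤ) (c : ℤ × ℤ) :
    undoR dR r1 r2 (fun j => u j - c) = fun j => undoR dR r1 r2 u j - c := by
  unfold undoR
  split_ifs <;> simp only [Rop_sub]

lemma unprep_sub (u : ℕ → ℤ × ℤ) (c : ℤ × ℤ) :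
    unprep (fun j => u j - c) = fun j => unprep u j - c := rfl

lemma unprep_prep (u : ℕ → ℤ × ℤ) : unprep (prep u) = u := by
  funext j; simp [unprep, prep]


/-- Walk predicate: self-avoiding, in the strip, unit steps, on indices `0..n`. -/
def OKn (n : ℕ) (u : ℕ → ℤ × ℤ) : Prop :=
  (∀ i j, i ≤ n → j ≤ n → u i = u j → i = j) ∧
  (∀ i, i ≤ n → -1 ≤ (u i).2 ∧ (u i).2 ≤ 1) ∧
  (∀ i, i < n → |(u (i+1)).1 - (u i).1| + |(u (i+1)).2 - (u i).2| = 1)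

lemma OKn.stepx {n : ℕ} {u : ℕ → ℤ × ℤ} (h : OKn n u) {i : ℕ} (hi : i < n) :
    |(u (i+1)).1 - (u i).1| ≤ 1 := by
  have h1 := h.2.2 i hi
  have h2 : (0:ℤ) ≤ |(u (i+1)).2 - (u i).2| := abs_nonneg _
  omega

/-- Discrete IVT, upward. -/
lemma ivt_up {n : ℕ} {u : ℕ → ℤ × ℤ} (h : OKn n u) {a b : ℕ} {c : ℤ}
    (hab : a ≤ b) (hb : b ≤ n) (ha' : (u a).1 ≤ c) (hb' : c ≤ (u b).1) :
    ∃ k, a ≤ k ∧ k ≤ b ∧ (u k).1 = c := by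
  have hex : ∃ k, a ≤ k ∧ k ≤ b ∧ c ≤ (u k).1 := ⟨b, hab, le_refl b, hb'⟩
  obtain ⟨hka, hkb, hkc⟩ := Nat.find_spec hex
  refine ⟨Nat.find hex, hka, hkb, ?_⟩
  rcases eq_or_lt_of_le hka with heq | hlt
  · rw [← heq] at hkc ⊢; omega
  · have hmin := Nat.find_min hex (m := Nat.find hex - 1) (by omega)
    push_neg at hmin
    have hless : (u (Nat.find hex - 1)).1 < c := by
      have := hmin (by omega) (by omega)
      omega
    have hstep := h.stepx (i := Nat.find hex - 1) (by omega)
    rw [show Nat.find hex - 1 + 1 = Nat.find hex by omega] at hstep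
    rw [abs_le] at hstep
    omega

/-- Discrete IVT, downward. -/
lemma ivt_down {n : ℕ} {u : ℕ → ℤ × ℤ} (h : OKn n u) {a b : ℕ} {c : ℤ}
    (hab : a ≤ b) (hb : b ≤ n) (ha' : c ≤ (u a).1) (hb' : (u b).1 ≤ c) :
    ∃ k, a ≤ k ∧ k ≤ b ∧ (u k).1 = c := by
  have hex : ∃ k, a ≤ k ∧ k ≤ b ∧ (u k).1 ≤ c := ⟨b, hab, le_refl b, hb'⟩
  obtain ⟨hka, hkb, hkc⟩ := Nat.find_spec hex
  refine ⟨Nat.find hex, hka, hkb, ?_⟩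
  rcases eq_or_lt_of_le hka with heq | hlt
  · rw [← heq] at hkc ⊢; omega
  · have hmin := Nat.find_min hex (m := Nat.find hex - 1) (by omega)
    push_neg at hmin
    have hless : c < (u (Nat.find hex - 1)).1 := by
      have := hmin (by omega) (by omega)
      omega
    have hstep := h.stepx (i := Nat.find hex - 1) (by omega)
    rw [show Nat.find hex - 1 + 1 = Nat.find hex by omega] at hstep
    rw [abs_le] at hstep
    omega

/-- Four distinct indices cannot share the same x-coordinate. -/
lemma pigeonhole4 {n : ℕ} {u : ℕ → ℤ × ℤ} (h : OKn n u) {k1 k2 k3 k4 : ℕ} {c : ℤ}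
    (h12 : k1 < k2) (h23 : k2 < k3) (h34 : k3 < k4) (h4 : k4 ≤ n)
    (e1 : (u k1).1 = c) (e2 : (u k2).1 = c) (e3 : (u k3).1 = c) (e4 : (u k4).1 = c) :
    False := by
  have b1 := h.2.1 k1 (by omega)
  have b2 := h.2.1 k2 (by omega)
  have b3 := h.2.1 k3 (by omega)
  have b4 := h.2.1 k4 (by omega)
  have hy : (u k1).2 = (u k2).2 ∨ (u k1).2 = (u k3).2 ∨ (u k1).2 = (u k4).2 ∨
      (u k2).2 = (u k3).2 ∨ (u k2).2 = (u k4).2 ∨ (u k3).2 = (u k4).2 := by omega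
  have inj := h.1
  have eqpt : ∀ a b : ℕ, (u a).1 = c → (u b).1 = c → (u a).2 = (u b).2 → u a = u b := by
    intro a b ha hb hab
    exact Prod.ext (by rw [ha, hb]) hab
  rcases hy with hy | hy | hy | hy | hy | hy
  · have := inj k1 k2 (by omega) (by omega) (eqpt _ _ e1 e2 hy); omega
  · have := inj k1 k3 (by omega) (by omega) (eqpt _ _ e1 e3 hy); omega
  · have := inj k1 k4 (by omega) (by omega) (eqpt _ _ e1 e4 hy); omega
  · have := inj k2 k3 (by omega) (by omega) (eqpt _ _ e2 e3 hy); omega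
  · have := inj k2 k4 (by omega) (by omega) (eqpt _ _ e2 e4 hy); omega
  · have := inj k3 k4 (by omega) (by omega) (eqpt _ _ e3 e4 hy); omega

/-- First argmin of x on `[0,b]`. -/
lemma exists_firstmin (u : ℕ → ℤ × ℤ) (b : ℕ) :
    ∃ i, i ≤ b ∧ (∀ j, j ≤ b → (u i).1 ≤ (u j).1) ∧ (∀ j, j < i → (u i).1 < (u j).1) := by
  obtain ⟨i0, hi0, hmin⟩ := Finset.exists_min_image (Finset.range (b+1))
    (fun j => (u j).1) ⟨0, by simp⟩
  have hP : ∃ k, k ≤ b ∧ ∀ j, j ≤ b → (u k).1 ≤ (u j).1 := by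
    refine ⟨i0, by simpa [Nat.lt_succ_iff] using hi0, fun j hj => hmin j ?_⟩
    simp [Finset.mem_range]; omega
  set i := Nat.find hP
  obtain ⟨hib, himin⟩ := Nat.find_spec hP
  refine ⟨i, hib, himin, fun j hj => ?_⟩
  have hmin' := Nat.find_min hP hj
  push_neg at hmin'
  have hjb : j ≤ b := by omega
  obtain ⟨j', hj', hlt⟩ := hmin' hjb
  calc (u i).1 ≤ (u j').1 := himin j' hj'
  _ < (u j).1 := hlt

/-- First argmax of x on `[0,b]`. -/
lemma exists_firstmax (u : ℕ → ℤ × ℤ) (b : ℕ) :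
    ∃ i, i ≤ b ∧ (∀ j, j ≤ b → (u j).1 ≤ (u i).1) ∧ (∀ j, j < i → (u j).1 < (u i).1) := by
  obtain ⟨i, hib, h1, h2⟩ := exists_firstmin (fun j => (-(u j).1, (u j).2)) b
  refine ⟨i, hib, fun j hj => ?_, fun j hj => ?_⟩
  · have := h1 j hj; simp at this; omega
  · have := h2 j hj; simp at this; omega

/-- Last argmax of x on `[0,b]`. -/
lemma exists_lastmax (u : ℕ → ℤ × ℤ) (b : ℕ) :
    ∃ i, i ≤ b ∧ (∀ j, j ≤ b → (u j).1 ≤ (u i).1) ∧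
      (∀ j, i < j → j ≤ b → (u j).1 < (u i).1) := by
  obtain ⟨i0, hi0, hmax⟩ := Finset.exists_max_image (Finset.range (b+1))
    (fun j => (u j).1) ⟨0, by simp⟩
  have hi0b : i0 ≤ b := by simpa [Nat.lt_succ_iff] using hi0
  have hmax' : ∀ j, j ≤ b → (u j).1 ≤ (u i0).1 := by
    intro j hj; exact hmax j (by simp [Finset.mem_range]; omega)
  set P : ℕ → Prop := fun k => ∀ j, j ≤ b → (u j).1 ≤ (u k).1 with hPdef
  set i := Nat.findGreatest P b with hidef
  have hspec : P i := Nat.findGreatest_spec hi0b hmax'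
  refine ⟨i, Nat.findGreatest_le b, hspec, fun j hij hjb => ?_⟩
  have hnot : ¬ P j := Nat.findGreatest_is_greatest hij hjb
  have hnot2 : ∃ j', j' ≤ b ∧ (u j).1 < (u j').1 := by
    by_contra hc
    push_neg at hc
    exact hnot (fun j' hj' => hc j' hj')
  obtain ⟨j', hj', hlt⟩ := hnot2
  calc (u j).1 < (u j').1 := hlt
  _ ≤ (u i).1 := hspec j' hj'


lemma Lop_fst_lt {i j : ℕ} (u : ℕ → ℤ × ℤ) (h : j < i) :
    Lop i u j = (2 * (u i).1 - (u j).1, (u j).2) := by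
  simp [Lop, Nat.not_le.mpr h]

lemma Lop_fst_ge {i j : ℕ} (u : ℕ → ℤ × ℤ) (h : i ≤ j) : Lop i u j = u j := by
  simp [Lop, h]

lemma Rop_fst_gt {i j : ℕ} (u : ℕ → ℤ × ℤ) (h : i < j) :
    Rop i u j = (2 * (u i).1 - (u j).1, (u j).2) := by
  simp [Rop, Nat.not_le.mpr h]

lemma Rop_fst_le {i j : ℕ} (u : ℕ → ℤ × ℤ) (h : j ≤ i) : Rop i u j = u j := by
  simp [Rop, h]

lemma okn_Lop {n i : ℕ} {u : ℕ → ℤ × ℤ} (h : OKn n u) (hi : i ≤ n)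
    (h1 : ∀ j, j < i → (u i).1 < (u j).1)
    (h2 : ∀ j, i ≤ j → j ≤ n → (u i).1 ≤ (u j).1) :
    OKn n (Lop i u) := by
  obtain ⟨hinj, hstrip, hstep⟩ := h
  refine ⟨?_, ?_, ?_⟩
  · intro a b ha hb heq
    by_cases hai : a < i <;> by_cases hbi : b < i
    · rw [Lop_fst_lt u hai, Lop_fst_lt u hbi] at heq
      have h1' : (u a).1 = (u b).1 := by
        have := congrArg Prod.fst heq; simp at this; omega
      have h2' : (u a).2 = (u b).2 := by
        have := congrArg Prod.snd heq; simpa using this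
      exact hinj a b ha hb (Prod.ext h1' h2')
    · rw [Lop_fst_lt u hai, Lop_fst_ge u (by omega)] at heq
      have hxa := h1 a hai
      have hxb := h2 b (by omega) hb
      have := congrArg Prod.fst heq; simp at this; omega
    · rw [Lop_fst_ge u (by omega), Lop_fst_lt u hbi] at heq
      have hxb := h1 b hbi
      have hxa := h2 a (by omega) ha
      have := congrArg Prod.fst heq; simp at this; omega
    · rw [Lop_fst_ge u (by omega), Lop_fst_ge u (by omega)] at heq
      exact hinj a b ha hb heq
  · intro j hj
    by_cases hji : j < i
    · rw [Lop_fst_lt u hji]; exact hstrip j hj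
    · rw [Lop_fst_ge u (by omega)]; exact hstrip j hj
  · intro j hj
    have hs := hstep j hj
    by_cases hj1 : j + 1 < i
    · rw [Lop_fst_lt u hj1, Lop_fst_lt u (by omega)]
      simp only
      have : |2 * (u i).1 - (u (j+1)).1 - (2 * (u i).1 - (u j).1)| =
          |(u (j+1)).1 - (u j).1| := by
        rw [show 2 * (u i).1 - (u (j+1)).1 - (2 * (u i).1 - (u j).1) =
          -((u (j+1)).1 - (u j).1) by ring, abs_neg]
      rw [this]; exact hs
    · by_cases hj2 : i ≤ j
      · rw [Lop_fst_ge u (by omega), Lop_fst_ge u hj2]; exact hs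
      · -- j < i ≤ j+1, so i = j+1
        have hij : i = j + 1 := by omega
        rw [Lop_fst_ge u (by omega), Lop_fst_lt u (by omega)]
        simp only
        have : |(u (j+1)).1 - (2 * (u i).1 - (u j).1)| = |(u (j+1)).1 - (u j).1| := by
          rw [hij]
          rw [show (u (j+1)).1 - (2 * (u (j+1)).1 - (u j).1) =
            -((u (j+1)).1 - (u j).1) by ring, abs_neg]
        rw [this]; exact hs

lemma okn_Rop {n i : ℕ} {u : ℕ → ℤ × ℤ} (h : OKn n u) (hi : i ≤ n)
    (h1 : ∀ j, i < j → j ≤ n → (u j).1 < (u i).1)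
    (h2 : ∀ j, j ≤ i → (u j).1 ≤ (u i).1) :
    OKn n (Rop i u) := by
  obtain ⟨hinj, hstrip, hstep⟩ := h
  refine ⟨?_, ?_, ?_⟩
  · intro a b ha hb heq
    by_cases hai : a ≤ i <;> by_cases hbi : b ≤ i
    · rw [Rop_fst_le u hai, Rop_fst_le u hbi] at heq
      exact hinj a b ha hb heq
    · rw [Rop_fst_le u hai, Rop_fst_gt u (by omega)] at heq
      have hxa := h2 a hai
      have hxb := h1 b (by omega) hb
      have := congrArg Prod.fst heq; simp at this; omega
    · rw [Rop_fst_gt u (by omega), Rop_fst_le u hbi] at heq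
      have hxb := h2 b hbi
      have hxa := h1 a (by omega) ha
      have := congrArg Prod.fst heq; simp at this; omega
    · rw [Rop_fst_gt u (by omega), Rop_fst_gt u (by omega)] at heq
      have h1' : (u a).1 = (u b).1 := by
        have := congrArg Prod.fst heq; simp at this; omega
      have h2' : (u a).2 = (u b).2 := by
        have := congrArg Prod.snd heq; simpa using this
      exact hinj a b ha hb (Prod.ext h1' h2')
  · intro j hj
    by_cases hji : j ≤ i
    · rw [Rop_fst_le u hji]; exact hstrip j hj
    · rw [Rop_fst_gt u (by omega)]; exact hstrip j hj
  · intro j hj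
    have hs := hstep j hj
    by_cases hj1 : j + 1 ≤ i
    · rw [Rop_fst_le u hj1, Rop_fst_le u (by omega)]; exact hs
    · by_cases hj2 : i ≤ j
      · by_cases hj3 : j = i
        · rw [Rop_fst_gt u (by omega), Rop_fst_le u (by omega)]
          simp only
          have : |2 * (u i).1 - (u (j+1)).1 - (u j).1| = |(u (j+1)).1 - (u j).1| := by
            rw [hj3,
              show 2 * (u i).1 - (u (i+1)).1 - (u i).1 =
                -((u (i+1)).1 - (u i).1) by ring, abs_neg]
          rw [this]; exact hs
        · rw [Rop_fst_gt u (by omega), Rop_fst_gt u (by omega)]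
          simp only
          have : |2 * (u i).1 - (u (j+1)).1 - (2 * (u i).1 - (u j).1)| =
              |(u (j+1)).1 - (u j).1| := by
            rw [show 2 * (u i).1 - (u (j+1)).1 - (2 * (u i).1 - (u j).1) =
              -((u (j+1)).1 - (u j).1) by ring, abs_neg]
          rw [this]; exact hs
      · omega

lemma okn_prep {n : ℕ} {u : ℕ → ℤ × ℤ} (h : OKn n u)
    (hmin : ∀ j, j ≤ n → (u 0).1 ≤ (u j).1) :
    OKn (n+1) (prep u) ∧ (∀ j, 1 ≤ j → j ≤ n + 1 → (prep u 0).1 < (prep u j).1) ∧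
      prep u 0 = ((u 0).1 - 1, (u 0).2) := by
  obtain ⟨hinj, hstrip, hstep⟩ := h
  have hp0 : prep u 0 = ((u 0).1 - 1, (u 0).2) := by simp [prep]
  have hpj : ∀ j, 1 ≤ j → prep u j = u (j - 1) := by
    intro j hj; rw [prep, if_neg (by omega)]
  have hlt : ∀ j, 1 ≤ j → j ≤ n + 1 → (prep u 0).1 < (prep u j).1 := by
    intro j hj hj'
    rw [hp0, hpj j hj]
    have := hmin (j-1) (by omega)
    simp only; omega
  refine ⟨⟨?_, ?_, ?_⟩, hlt, hp0⟩
  · intro a b ha hb heq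
    by_cases ha0 : a = 0 <;> by_cases hb0 : b = 0
    · omega
    · exfalso
      subst ha0
      have := hlt b (by omega) hb
      rw [heq] at this; exact lt_irrefl _ this
    · exfalso
      subst hb0
      have := hlt a (by omega) ha
      rw [heq] at this; exact lt_irrefl _ this
    · rw [hpj a (by omega), hpj b (by omega)] at heq
      have := hinj (a-1) (b-1) (by omega) (by omega) heq
      omega
  · intro j hj
    by_cases hj0 : j = 0
    · subst hj0; rw [hp0]; exact hstrip 0 (by omega)
    · rw [hpj j (by omega)]; exact hstrip (j-1) (by omega)
  · intro j hj
    by_cases hj0 : j = 0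
    · subst hj0
      rw [hp0, hpj 1 (by omega)]
      simp only
      norm_num
    · rw [hpj j (by omega), hpj (j+1) (by omega)]
      have := hstep (j-1) (by omega)
      rw [show j + 1 - 1 = j - 1 + 1 by omega]
      exact this

lemma okn_normz {n : ℕ} {u : ℕ → ℤ × ℤ} (h : OKn n u) (hy : (u 0).2 = 0) :
    OKn n (normz u) := by
  obtain ⟨hinj, hstrip, hstep⟩ := h
  have hval : ∀ j, normz u j = ((u j).1 - (u 0).1, (u j).2) := by
    intro j
    simp [normz, Prod.ext_iff, hy]
  refine ⟨?_, ?_, ?_⟩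
  · intro a b ha hb heq
    rw [hval, hval] at heq
    have h1' : (u a).1 = (u b).1 := by
      have := congrArg Prod.fst heq; simp at this; omega
    have h2' : (u a).2 = (u b).2 := by
      have := congrArg Prod.snd heq; simpa using this
    exact hinj a b ha hb (Prod.ext h1' h2')
  · intro j hj; rw [hval]; exact hstrip j hj
  · intro j hj
    rw [hval, hval]
    simp only
    rw [show (u (j+1)).1 - (u 0).1 - ((u j).1 - (u 0).1) = (u (j+1)).1 - (u j).1 by ring]
    exact hstep j hj


lemma undoL_zero (l1 l2 l3 : ℕ) (u : ℕ → ℤ × ℤ) : undoL 0 l1 l2 l3 u = u := by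
  simp [undoL]
lemma undoL_one (l1 l2 l3 : ℕ) (u : ℕ → ℤ × ℤ) : undoL 1 l1 l2 l3 u = Lop l1 u := by
  norm_num [undoL]
lemma undoL_two (l1 l2 l3 : ℕ) (u : ℕ → ℤ × ℤ) : undoL 2 l1 l2 l3 u = Lop l1 (Lop l2 u) := by
  norm_num [undoL]
lemma undoL_three (l1 l2 l3 : ℕ) (u : ℕ → ℤ × ℤ) :
    undoL 3 l1 l2 l3 u = Lop l1 (Lop l2 (Lop l3 u)) := by
  norm_num [undoL]

/-- Left phase: at most three head-unfoldings make index 0 a weak minimum. -/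
lemma leftPhase {n : ℕ} {w : ℕ → ℤ × ℤ} (h : OKn n w) :
    ∃ (u : ℕ → ℤ × ℤ) (dL l1 l2 l3 : ℕ),
      OKn n u ∧
      (∀ j, j ≤ n → (u 0).1 ≤ (u j).1) ∧
      (u 0).2 = (w 0).2 ∧
      dL ≤ 3 ∧
      (dL = 0 → l1 = 0 ∧ l2 = 0 ∧ l3 = 0) ∧
      (dL = 1 → 1 ≤ l1 ∧ l2 = 0 ∧ l3 = 0) ∧
      (dL = 2 → l3 = 0) ∧
      l1 ≤ n ∧ l2 ≤ n ∧ l3 ≤ n ∧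
      undoL dL l1 l2 l3 u = w := by
  by_cases case0 : ∀ j, j ≤ n → (w 0).1 ≤ (w j).1
  · exact ⟨w, 0, 0, 0, 0, h, case0, rfl, by omega, by simp, by simp, by simp,
      by omega, by omega, by omega, by simp [undoL]⟩
  push_neg at case0
  obtain ⟨j0, hj0n, hj0⟩ := case0
  obtain ⟨l1, hl1n, hl1min, hl1first⟩ := exists_firstmin w n
  have hml : (w l1).1 < (w 0).1 := lt_of_le_of_lt (hl1min j0 hj0n) hj0
  have hl1pos : 1 ≤ l1 := by
    rcases Nat.eq_zero_or_pos l1 with h0 | h0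
    · rw [h0] at hml; omega
    · omega
  set u1 := Lop l1 w with hu1
  have ok1 : OKn n u1 := okn_Lop h hl1n hl1first (fun j _ hj => hl1min j hj)
  have v1lt : ∀ j, j < l1 → (u1 j).1 = 2 * (w l1).1 - (w j).1 := by
    intro j hj; rw [hu1, Lop_fst_lt w hj]
  have v1ge : ∀ j, l1 ≤ j → u1 j = w j := by
    intro j hj; rw [hu1, Lop_fst_ge w hj]
  have y1 : ∀ j, j < l1 → (u1 j).2 = (w j).2 := by
    intro j hj; rw [hu1, Lop_fst_lt w hj]
  by_cases case1 : ∀ j, j < l1 → (w j).1 ≤ (w 0).1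
  · refine ⟨u1, 1, l1, 0, 0, ok1, ?_, ?_, by omega, by simp, fun _ => ⟨hl1pos, rfl, rfl⟩,
      by simp, hl1n, by omega, by omega, ?_⟩
    · intro j hj
      rw [v1lt 0 (by omega)]
      by_cases hjl : j < l1
      · rw [v1lt j hjl]
        have := case1 j hjl
        omega
      · rw [v1ge j (by omega)]
        have h1 := hl1min j hj
        have h2 := case1 0 (by omega)
        omega
    · rw [y1 0 (by omega)]
    · show undoL 1 l1 0 0 u1 = w
      rw [undoL_one, hu1, Lop_Lop]
  push_neg at case1
  obtain ⟨j1, hj1l, hj1⟩ := case1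
  obtain ⟨g, hgb, hgmax', hgfirst⟩ := exists_firstmax w (l1 - 1)
  have hgl : g < l1 := by omega
  have hgmax : ∀ j, j < l1 → (w j).1 ≤ (w g).1 := fun j hj => hgmax' j (by omega)
  have hG : (w 0).1 < (w g).1 := lt_of_lt_of_le hj1 (hgmax j1 hj1l)
  have hgpos : 1 ≤ g := by
    rcases Nat.eq_zero_or_pos g with h0 | h0
    · rw [h0] at hG; omega
    · omega
  have hgn : g ≤ n := by omega
  have hlg : (w l1).1 ≤ (w g).1 := hl1min g hgn
  set u2 := Lop g u1 with hu2
  have ok2 : OKn n u2 := by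
    apply okn_Lop ok1 hgn
    · intro j hj
      rw [v1lt g hgl, v1lt j (by omega)]
      have := hgfirst j hj
      omega
    · intro j hjg hjn
      rw [v1lt g hgl]
      by_cases hjl : j < l1
      · rw [v1lt j hjl]
        have := hgmax j hjl
        omega
      · rw [v1ge j (by omega)]
        have := hl1min j hjn
        omega
  have v2lt : ∀ j, j < g → (u2 j).1 = 2 * (w l1).1 - 2 * (w g).1 + (w j).1 := by
    intro j hj
    rw [hu2, Lop_fst_lt u1 hj]
    simp only
    rw [v1lt g hgl, v1lt j (by omega)]
    ring
  have v2mid : ∀ j, g ≤ j → j < l1 → (u2 j).1 = 2 * (w l1).1 - (w j).1 := by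
    intro j hj hj'
    rw [hu2, Lop_fst_ge u1 hj, v1lt j hj']
  have v2ge : ∀ j, l1 ≤ j → u2 j = w j := by
    intro j hj
    rw [hu2, Lop_fst_ge u1 (by omega), v1ge j hj]
  have y2 : ∀ j, j < g → (u2 j).2 = (w j).2 := by
    intro j hj
    rw [hu2, Lop_fst_lt u1 hj]
    simp only
    exact y1 j (by omega)
  by_cases case2 : ∀ j, j < g → (w 0).1 ≤ (w j).1
  · refine ⟨u2, 2, l1, g, 0, ok2, ?_, ?_, by omega, by simp, by simp, fun _ => rfl,
      hl1n, hgn, by omega, ?_⟩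
    · intro j hj
      rw [v2lt 0 (by omega)]
      by_cases hjg : j < g
      · rw [v2lt j hjg]
        have := case2 j hjg
        omega
      · by_cases hjl : j < l1
        · rw [v2mid j (by omega) hjl]
          have := hgmax j hjl
          omega
        · rw [v2ge j (by omega)]
          have := hl1min j hj
          omega
    · rw [y2 0 (by omega)]
    · show undoL 2 l1 g 0 u2 = w
      rw [undoL_two, hu2, Lop_Lop, hu1, Lop_Lop]
  push_neg at case2
  obtain ⟨j2, hj2g, hj2⟩ := case2
  obtain ⟨t, htb, htmin', htfirst⟩ := exists_firstmin w (g - 1)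
  have htg : t < g := by omega
  have htmin : ∀ j, j < g → (w t).1 ≤ (w j).1 := fun j hj => htmin' j (by omega)
  have hT : (w t).1 < (w 0).1 := lt_of_le_of_lt (htmin j2 hj2g) hj2
  have htpos : 1 ≤ t := by
    rcases Nat.eq_zero_or_pos t with h0 | h0
    · rw [h0] at hT; omega
    · omega
  have htn : t ≤ n := by omega
  have htG : (w t).1 ≤ (w g).1 := hgmax t (by omega)
  set u3 := Lop t u2 with hu3
  have ok3 : OKn n u3 := by
    apply okn_Lop ok2 htn
    · intro j hj
      rw [v2lt t htg, v2lt j (by omega)]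
      have := htfirst j hj
      omega
    · intro j hjt hjn
      rw [v2lt t htg]
      by_cases hjg : j < g
      · rw [v2lt j hjg]
        have := htmin j hjg
        omega
      · by_cases hjl : j < l1
        · rw [v2mid j (by omega) hjl]
          have := hgmax j hjl
          omega
        · rw [v2ge j (by omega)]
          have := hl1min j hjn
          omega
  -- key claim via pigeonhole: everything before t is ≤ (w 0).1
  have claim : ∀ j, j < t → (w j).1 ≤ (w 0).1 := by
    intro j3 hj3t
    by_contra hj3
    push_neg at hj3
    have hj3pos : 1 ≤ j3 := by
      rcases Nat.eq_zero_or_pos j3 with h0 | h0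
      · rw [h0] at hj3; omega
      · omega
    obtain ⟨k1, hk1a, hk1b, hk1v⟩ := ivt_down h (a := j3) (b := t) (c := (w 0).1)
      (by omega) htn (le_of_lt hj3) (le_of_lt hT)
    obtain ⟨k2, hk2a, hk2b, hk2v⟩ := ivt_up h (a := t) (b := g) (c := (w 0).1)
      (by omega) hgn (le_of_lt hT) (le_of_lt hG)
    obtain ⟨k3, hk3a, hk3b, hk3v⟩ := ivt_down h (a := g) (b := l1) (c := (w 0).1)
      (by omega) hl1n (le_of_lt hG) (le_of_lt hml)
    have hk1j3 : j3 < k1 := by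
      rcases eq_or_lt_of_le hk1a with he | hl
      · rw [← he] at hk1v; omega
      · omega
    have hk2t : t < k2 := by
      rcases eq_or_lt_of_le hk2a with he | hl
      · rw [← he] at hk2v; omega
      · omega
    have hk3g : g < k3 := by
      rcases eq_or_lt_of_le hk3a with he | hl
      · rw [← he] at hk3v; omega
      · omega
    exact pigeonhole4 h (k1 := 0) (k2 := k1) (k3 := k2) (k4 := k3) (c := (w 0).1)
      (by omega) (by omega) (by omega) (by omega) rfl hk1v hk2v hk3v
  have v3lt : ∀ j, j < t → (u3 j).1 =
      2 * (w l1).1 - 2 * (w g).1 + 2 * (w t).1 - (w j).1 := by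
    intro j hj
    rw [hu3, Lop_fst_lt u2 hj]
    simp only
    rw [v2lt t htg, v2lt j (by omega)]
    ring
  have y3 : ∀ j, j < t → (u3 j).2 = (w j).2 := by
    intro j hj
    rw [hu3, Lop_fst_lt u2 hj]
    simp only
    exact y2 j (by omega)
  refine ⟨u3, 3, l1, g, t, ok3, ?_, ?_, by omega, by simp, by simp, by simp,
    hl1n, hgn, htn, ?_⟩
  · intro j hj
    rw [v3lt 0 (by omega)]
    by_cases hjt : j < t
    · rw [v3lt j hjt]
      have := claim j hjt
      omega
    · rw [hu3, Lop_fst_ge u2 (by omega)]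
      by_cases hjg : j < g
      · rw [v2lt j hjg]
        have := htmin j hjg
        omega
      · by_cases hjl : j < l1
        · rw [v2mid j (by omega) hjl]
          have := hgmax j hjl
          omega
        · rw [v2ge j (by omega)]
          have := hl1min j hj
          omega
  · rw [y3 0 (by omega)]
  · show undoL 3 l1 g t u3 = w
    rw [undoL_three, hu3, Lop_Lop, hu2, Lop_Lop, hu1, Lop_Lop]


lemma undoR_zero (r1 r2 : ℕ) (u : ℕ → ℤ × ℤ) : undoR 0 r1 r2 u = u := by simp [undoR]
lemma undoR_one (r1 r2 : ℕ) (u : ℕ → ℤ × ℤ) : undoR 1 r1 r2 u = Rop r1 u := by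
  norm_num [undoR]
lemma undoR_two (r1 r2 : ℕ) (u : ℕ → ℤ × ℤ) : undoR 2 r1 r2 u = Rop r1 (Rop r2 u) := by
  norm_num [undoR]

/-- Right phase: at most two tail-unfoldings make index `N` a weak maximum,
given that index 0 is a strict minimum. -/
lemma rightPhase {N : ℕ} {u : ℕ → ℤ × ℤ} (h : OKn N u) (hN : 1 ≤ N)
    (hstrict : ∀ j, 1 ≤ j → j ≤ N → (u 0).1 < (u j).1) :
    ∃ (v : ℕ → ℤ × ℤ) (dR r1 r2 : ℕ),
      OKn N v ∧
      (∀ j, 1 ≤ j → j ≤ N → (v 0).1 < (v j).1) ∧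
      (∀ j, j ≤ N → (v j).1 ≤ (v N).1) ∧
      v 0 = u 0 ∧
      dR ≤ 2 ∧
      (dR = 0 → r1 = 0 ∧ r2 = 0) ∧
      (dR = 1 → 1 ≤ r1 ∧ r2 = 0) ∧
      r1 ≤ N - 1 ∧ r2 ≤ N - 1 ∧
      undoR dR r1 r2 v = u := by
  obtain ⟨r1, hr1N, hr1max, hr1last⟩ := exists_lastmax u N
  by_cases hd0 : r1 = N
  · refine ⟨u, 0, 0, 0, h, hstrict, ?_, rfl, by omega, fun _ => ⟨rfl, rfl⟩, by simp,
      by omega, by omega, undoR_zero 0 0 u⟩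
    intro j hj
    rw [← hd0]
    exact hr1max j hj
  have hr1N' : r1 < N := by omega
  have hA1 : (u 1).1 ≤ (u r1).1 := hr1max 1 hN
  have h01 : (u 0).1 < (u 1).1 := hstrict 1 (le_refl 1) hN
  have hr1pos : 1 ≤ r1 := by
    rcases Nat.eq_zero_or_pos r1 with h0 | h0
    · exfalso; have := hr1max 1 hN; rw [h0] at this; omega
    · omega
  set v1 := Rop r1 u with hv1
  have ok1 : OKn N v1 := okn_Rop h hr1N hr1last (fun j hj => hr1max j (hj.trans hr1N))
  have w1gt : ∀ j, r1 < j → (v1 j).1 = 2 * (u r1).1 - (u j).1 := by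
    intro j hj; rw [hv1, Rop_fst_gt u hj]
  have w1le : ∀ j, j ≤ r1 → v1 j = u j := by
    intro j hj; rw [hv1, Rop_fst_le u hj]
  have strict1 : ∀ j, 1 ≤ j → j ≤ N → (v1 0).1 < (v1 j).1 := by
    intro j hj hjN
    rw [w1le 0 (by omega)]
    by_cases hjr : j ≤ r1
    · rw [w1le j hjr]; exact hstrict j hj hjN
    · rw [w1gt j (by omega)]
      have := hr1last j (by omega) hjN
      omega
  obtain ⟨r2, hr2N, hr2max, hr2last⟩ := exists_lastmax v1 N
  have hr2r1 : r1 < r2 := by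
    by_contra hc
    push_neg at hc
    have h1 : (v1 (r1+1)).1 = 2 * (u r1).1 - (u (r1+1)).1 := w1gt (r1+1) (by omega)
    have h2 : (u (r1+1)).1 < (u r1).1 := hr1last (r1+1) (by omega) (by omega)
    have h3 := hr2max (r1+1) (by omega)
    have h4 : (v1 r2).1 = (u r2).1 := by rw [w1le r2 hc]
    have h5 : (u r2).1 ≤ (u r1).1 := hr1max r2 (by omega)
    omega
  by_cases hd1 : r2 = N
  · refine ⟨v1, 1, r1, 0, ok1, strict1, ?_, w1le 0 (by omega), by omega, by simp,
      fun _ => ⟨hr1pos, rfl⟩, by omega, by omega, ?_⟩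
    · intro j hj
      rw [← hd1]
      exact hr2max j hj
    · rw [undoR_one, hv1, Rop_Rop]
  have hr2N' : r2 < N := by omega
  -- facts about u on (r1, N]
  have hm2 : ∀ k, r1 < k → k ≤ N → (u r2).1 ≤ (u k).1 := by
    intro k hk hkN
    have h1 := hr2max k hkN
    rw [w1gt k hk, w1gt r2 hr2r1] at h1
    omega
  have hm2s : ∀ k, r2 < k → k ≤ N → (u r2).1 < (u k).1 := by
    intro k hk hkN
    have h1 := hr2last k hk hkN
    rw [w1gt k (by omega), w1gt r2 hr2r1] at h1
    omega
  have hm2A : (u r2).1 ≤ (u r1).1 := hr1max r2 hr2N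
  have hm2N : (u r2).1 < (u N).1 := hm2s N hr2N' (le_refl N)
  set v2 := Rop r2 v1 with hv2
  have ok2 : OKn N v2 := okn_Rop ok1 hr2N hr2last (fun j hj => hr2max j (hj.trans hr2N))
  have w2gt : ∀ j, r2 < j → j ≤ N → (v2 j).1 = 2 * (u r1).1 - 2 * (u r2).1 + (u j).1 := by
    intro j hj hjN
    rw [hv2, Rop_fst_gt v1 hj]
    simp only
    rw [w1gt j (by omega), w1gt r2 hr2r1]
    ring
  have w2le : ∀ j, j ≤ r2 → v2 j = v1 j := by
    intro j hj; rw [hv2, Rop_fst_le v1 hj]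
  -- the key claim : N is a weak maximum of v2
  have wmax2 : ∀ j, j ≤ N → (v2 j).1 ≤ (v2 N).1 := by
    intro j hjN
    rw [w2gt N hr2N' (le_refl N)]
    by_cases hjr2 : j ≤ r2
    · rw [w2le j hjr2]
      by_cases hjr1 : j ≤ r1
      · rw [w1le j hjr1]
        have h1 := hr1max j (by omega)
        omega
      · rw [w1gt j (by omega)]
        have h1 := hm2 j (by omega) (by omega)
        omega
    · rw [w2gt j (by omega) hjN]
      -- need (u j).1 ≤ (u N).1
      by_contra hc
      push_neg at hc
      have hjlt : (u N).1 < (u j).1 := by omega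
      have hjN' : j < N := by
        rcases eq_or_lt_of_le hjN with he | hl
        · exfalso; rw [he] at hjlt; omega
        · exact hl
      have hc0 : (u 0).1 < (u N).1 := hstrict N hN (le_refl N)
      have hAj : (u j).1 ≤ (u r1).1 := hr1max j hjN
      have hm2c : (u r2).1 < (u N).1 := hm2N
      obtain ⟨k1, hk1a, hk1b, hk1v⟩ := ivt_up h (a := 0) (b := r1) (c := (u N).1)
        (by omega) (by omega) (le_of_lt hc0) (by omega)
      obtain ⟨k2, hk2a, hk2b, hk2v⟩ := ivt_down h (a := r1) (b := r2) (c := (u N).1)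
        (by omega) (by omega) (by omega) (by omega)
      obtain ⟨k3, hk3a, hk3b, hk3v⟩ := ivt_up h (a := r2) (b := j) (c := (u N).1)
        (by omega) (by omega) (by omega) (by omega)
      obtain ⟨k4, hk4a, hk4b, hk4v⟩ := ivt_down h (a := j) (b := N) (c := (u N).1)
        (by omega) (le_refl N) (by omega) (le_refl _)
      have o1 : k1 < r1 := by
        rcases eq_or_lt_of_le hk1b with he | hl
        · exfalso; rw [he] at hk1v; omega
        · exact hl
      have o2 : r1 < k2 := by
        rcases eq_or_lt_of_le hk2a with he | hl
        · exfalso; rw [← he] at hk2v; omega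
        · exact hl
      have o3 : r2 < k3 := by
        rcases eq_or_lt_of_le hk3a with he | hl
        · exfalso; rw [← he] at hk3v; omega
        · exact hl
      have o4 : j < k4 := by
        rcases eq_or_lt_of_le hk4a with he | hl
        · exfalso; rw [← he] at hk4v; omega
        · exact hl
      exact pigeonhole4 h (k1 := k1) (k2 := k2) (k3 := k3) (k4 := k4) (c := (u N).1)
        (by omega) (by omega) (by omega) (by omega) hk1v hk2v hk3v hk4v
  have strict2 : ∀ j, 1 ≤ j → j ≤ N → (v2 0).1 < (v2 j).1 := by
    intro j hj hjN
    rw [w2le 0 (by omega), w1le 0 (by omega)]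
    by_cases hjr2 : j ≤ r2
    · rw [w2le j hjr2]
      have := strict1 j hj hjN
      rw [w1le 0 (by omega)] at this
      exact this
    · rw [w2gt j (by omega) hjN]
      have h1 := hm2s j (by omega) hjN
      omega
  refine ⟨v2, 2, r1, r2, ok2, strict2, wmax2, ?_, by omega, by simp, by simp,
    by omega, by omega, ?_⟩
  · rw [w2le 0 (by omega), w1le 0 (by omega)]
  · rw [undoR_two, hv2, Rop_Rop, hv1, Rop_Rop]


/-- Main construction: every walk gives a "bridge walk" of length `n+1`
together with reconstruction data. -/
lemma mainExists {n : ℕ} {w : ℕ → ℤ × ℤ} (h : OKn n w) (h0 : w 0 = (0, 0)) :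
    ∃ (v : ℕ → ℤ × ℤ) (dL l1 l2 l3 dR r1 r2 : ℕ),
      OKn (n+1) v ∧ v 0 = (0, 0) ∧
      (∀ j, 1 ≤ j → j ≤ n+1 → (v 0).1 < (v j).1) ∧
      (∀ j, j ≤ n+1 → (v j).1 ≤ (v (n+1)).1) ∧
      dL ≤ 3 ∧ (dL = 0 → l1 = 0 ∧ l2 = 0 ∧ l3 = 0) ∧
      (dL = 1 → 1 ≤ l1 ∧ l2 = 0 ∧ l3 = 0) ∧ (dL = 2 → l3 = 0) ∧
      l1 ≤ n ∧ l2 ≤ n ∧ l3 ≤ n ∧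
      dR ≤ 2 ∧ (dR = 0 → r1 = 0 ∧ r2 = 0) ∧ (dR = 1 → 1 ≤ r1 ∧ r2 = 0) ∧
      r1 ≤ n ∧ r2 ≤ n ∧
      decode v dL l1 l2 l3 dR r1 r2 = w := by
  obtain ⟨u, dL, l1, l2, l3, oku, humin, huy, hdL3, hd0, hd1, hd2, hb1, hb2, hb3, hundoL⟩ :=
    leftPhase h
  obtain ⟨okp, hstrictp, hp0⟩ := okn_prep oku humin
  obtain ⟨v', dR, r1, r2, okv', strictv', wmaxv', hv'0, hdR2, hr0, hr1d, hrb1, hrb2, hundoR⟩ :=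
    rightPhase okp (by omega) hstrictp
  have v'0y : (v' 0).2 = 0 := by
    rw [hv'0, hp0]
    simp only
    rw [huy, h0]
  refine ⟨normz v', dL, l1, l2, l3, dR, r1, r2, okn_normz okv' v'0y, ?_, ?_, ?_,
    hdL3, hd0, hd1, hd2, hb1, hb2, hb3, hdR2, hr0, hr1d, by omega, by omega, ?_⟩
  · show v' 0 - v' 0 = (0, 0)
    rw [sub_self]
    rfl
  · intro j hj hjN
    have := strictv' j hj hjN
    show (v' 0 - v' 0).1 < (v' j - v' 0).1
    simp only [Prod.fst_sub]
    omega
  · intro j hj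
    have := wmaxv' j hj
    show (v' j - v' 0).1 ≤ (v' (n+1) - v' 0).1
    simp only [Prod.fst_sub]
    omega
  · -- decode equality
    have e1 : undoR dR r1 r2 (normz v') = fun j => prep u j - v' 0 := by
      rw [show normz v' = (fun j => v' j - v' 0) from rfl, undoR_sub]
      funext j
      rw [congrFun hundoR j]
    have e2 : unprep (undoR dR r1 r2 (normz v')) = fun j => u j - v' 0 := by
      rw [e1]
      funext j
      show prep u (j+1) - v' 0 = u j - v' 0
      simp [prep]
    have e3 : undoL dL l1 l2 l3 (unprep (undoR dR r1 r2 (normz v'))) =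
        fun j => w j - v' 0 := by
      rw [e2, undoL_sub]
      funext j
      rw [congrFun hundoL j]
    show normz (undoL dL l1 l2 l3 (unprep (undoR dR r1 r2 (normz v')))) = w
    rw [e3]
    funext j
    show (w j - v' 0) - (w 0 - v' 0) = w j
    rw [sub_sub_sub_cancel_right, h0]
    simp

lemma Rop_congr {M i : ℕ} {u u' : ℕ → ℤ × ℤ} (hi : i ≤ M)
    (h : ∀ j, j ≤ M → u j = u' j) : ∀ j, j ≤ M → Rop i u j = Rop i u' j := by
  intro j hj
  unfold Rop
  rw [h j hj, h i hi]

lemma Lop_congr {M i : ℕ} {u u' : ℕ → ℤ × ℤ} (hi : i ≤ M)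
    (h : ∀ j, j ≤ M → u j = u' j) : ∀ j, j ≤ M → Lop i u j = Lop i u' j := by
  intro j hj
  unfold Lop
  rw [h j hj, h i hi]

lemma undoR_congr {M dR r1 r2 : ℕ} {u u' : ℕ → ℤ × ℤ} (h1 : r1 ≤ M) (h2 : r2 ≤ M)
    (h : ∀ j, j ≤ M → u j = u' j) :
    ∀ j, j ≤ M → undoR dR r1 r2 u j = undoR dR r1 r2 u' j := by
  unfold undoR
  split_ifs
  · exact h
  · exact Rop_congr h1 h
  · exact Rop_congr h1 (Rop_congr h2 h)

lemma undoL_congr {M dL l1 l2 l3 : ℕ} {u u' : ℕ → ℤ × ℤ} (h1 : l1 ≤ M) (h2 : l2 ≤ M)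
    (h3 : l3 ≤ M) (h : ∀ j, j ≤ M → u j = u' j) :
    ∀ j, j ≤ M → undoL dL l1 l2 l3 u j = undoL dL l1 l2 l3 u' j := by
  unfold undoL
  split_ifs
  · exact h
  · exact Lop_congr h1 h
  · exact Lop_congr h1 (Lop_congr h2 h)
  · exact Lop_congr h1 (Lop_congr h2 (Lop_congr h3 h))

lemma decode_congr {n dL l1 l2 l3 dR r1 r2 : ℕ} {u u' : ℕ → ℤ × ℤ}
    (hagree : ∀ j, j ≤ n + 1 → u j = u' j)
    (hl1 : l1 ≤ n) (hl2 : l2 ≤ n) (hl3 : l3 ≤ n) (hr1 : r1 ≤ n + 1) (hr2 : r2 ≤ n + 1) :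
    ∀ j, j ≤ n → decode u dL l1 l2 l3 dR r1 r2 j = decode u' dL l1 l2 l3 dR r1 r2 j := by
  have s1 : ∀ j, j ≤ n + 1 → undoR dR r1 r2 u j = undoR dR r1 r2 u' j :=
    undoR_congr hr1 hr2 hagree
  have s2 : ∀ j, j ≤ n → unprep (undoR dR r1 r2 u) j = unprep (undoR dR r1 r2 u') j := by
    intro j hj
    exact s1 (j+1) (by omega)
  have s3 : ∀ j, j ≤ n → undoL dL l1 l2 l3 (unprep (undoR dR r1 r2 u)) j =
      undoL dL l1 l2 l3 (unprep (undoR dR r1 r2 u')) j :=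
    undoL_congr hl1 hl2 hl3 s2
  intro j hj
  unfold decode normz
  rw [s3 j hj, s3 0 (by omega)]

/-- packing of the left data -/
def encL (m dL l1 l2 l3 : ℕ) : ℕ :=
  match dL with
  | 0 => 0
  | 1 => l1
  | 2 => m + (l1 * m + l2)
  | _ => m + m * m + ((l1 * m + l2) * m + l3)

/-- packing of the right data -/
def encR (m dR r1 r2 : ℕ) : ℕ :=
  match dR with
  | 0 => 0
  | 1 => r1
  | _ => m + (r1 * m + r2)

lemma digitbound2 {a b M m : ℕ} (ha : a < M) (hb : b < m) : a * m + b < M * m := by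
  have h1 : (a + 1) * m ≤ M * m := Nat.mul_le_mul_right m (by omega)
  have h2 : (a + 1) * m = a * m + m := by ring
  omega

lemma digit_unique {a b a' b' m : ℕ} (hb : b < m) (hb' : b' < m)
    (h : a * m + b = a' * m + b') : a = a' ∧ b = b' := by
  rcases lt_trichotomy a a' with hlt | heq | hgt
  · exfalso
    have h1 : (a + 1) * m ≤ a' * m := Nat.mul_le_mul_right m (by omega)
    have h2 : (a + 1) * m = a * m + m := by ring
    omega
  · subst heq; omega
  · exfalso
    have h1 : (a' + 1) * m ≤ a * m := Nat.mul_le_mul_right m (by omega)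
    have h2 : (a' + 1) * m = a' * m + m := by ring
    omega

structure LBounds (m dL l1 l2 l3 : ℕ) : Prop where
  hm : 1 ≤ m
  hdL : dL ≤ 3
  h0 : dL = 0 → l1 = 0 ∧ l2 = 0 ∧ l3 = 0
  h1 : dL = 1 → 1 ≤ l1 ∧ l2 = 0 ∧ l3 = 0
  h2 : dL = 2 → l3 = 0
  b1 : l1 < m
  b2 : l2 < m
  b3 : l3 < m

lemma encL_bound {m dL l1 l2 l3 : ℕ} (h : LBounds m dL l1 l2 l3) :
    encL m dL l1 l2 l3 < m + m * m + m * m * m := by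
  obtain ⟨hm, hdL, h0, h1, h2, b1, b2, b3⟩ := h
  have d1 : l1 * m + l2 < m * m := digitbound2 b1 b2
  have d2 : (l1 * m + l2) * m + l3 < (m * m) * m := digitbound2 d1 b3
  have e : (m * m) * m = m * m * m := by ring
  have hc : dL = 0 ∨ dL = 1 ∨ dL = 2 ∨ dL = 3 := by omega
  rcases hc with rfl | rfl | rfl | rfl
  · show 0 < _ ; omega
  · show l1 < _ ; omega
  · show m + (l1 * m + l2) < _ ; omega
  · show m + m * m + ((l1 * m + l2) * m + l3) < _ ; omega

lemma encR_bound {m dR r1 r2 : ℕ} (hm : 1 ≤ m) (hdR : dR ≤ 2) (b1 : r1 < m) (b2 : r2 < m) :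
    encR m dR r1 r2 < 1 + m + m * m := by
  have d1 : r1 * m + r2 < m * m := digitbound2 b1 b2
  have hc : dR = 0 ∨ dR = 1 ∨ dR = 2 := by omega
  rcases hc with rfl | rfl | rfl
  · show 0 < _ ; omega
  · show r1 < _ ; omega
  · show m + (r1 * m + r2) < _ ; omega

lemma encL_inj {m dL l1 l2 l3 dL' l1' l2' l3' : ℕ}
    (h : LBounds m dL l1 l2 l3) (h' : LBounds m dL' l1' l2' l3')
    (he : encL m dL l1 l2 l3 = encL m dL' l1' l2' l3') :
    dL = dL' ∧ l1 = l1' ∧ l2 = l2' ∧ l3 = l3' := by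
  obtain ⟨hm, hdL, h0, h1, h2, b1, b2, b3⟩ := h
  obtain ⟨hm', hdL', h0', h1', h2', b1', b2', b3'⟩ := h'
  have d1 : l1 * m + l2 < m * m := digitbound2 b1 b2
  have d1' : l1' * m + l2' < m * m := digitbound2 b1' b2'
  have hc : dL = 0 ∨ dL = 1 ∨ dL = 2 ∨ dL = 3 := by omega
  have hc' : dL' = 0 ∨ dL' = 1 ∨ dL' = 2 ∨ dL' = 3 := by omega
  rcases hc with rfl | rfl | rfl | rfl <;> rcases hc' with rfl | rfl | rfl | rfl
  · have := h0 rfl; have := h0' rfl; exact ⟨rfl, by omega, by omega, by omega⟩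
  · exfalso; have he2 : (0:ℕ) = l1' := he; have := h1' rfl; omega
  · exfalso; have he2 : (0:ℕ) = m + (l1' * m + l2') := he; omega
  · exfalso
    have he2 : (0:ℕ) = m + m * m + ((l1' * m + l2') * m + l3') := he; omega
  · exfalso; have he2 : l1 = 0 := he; have := h1 rfl; omega
  · have he2 : l1 = l1' := he
    have := h1 rfl; have := h1' rfl
    exact ⟨rfl, he2, by omega, by omega⟩
  · exfalso; have he2 : l1 = m + (l1' * m + l2') := he; omega
  · exfalso
    have he2 : l1 = m + m * m + ((l1' * m + l2') * m + l3') := he; omega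
  · exfalso; have he2 : m + (l1 * m + l2) = 0 := he; omega
  · exfalso; have he2 : m + (l1 * m + l2) = l1' := he; omega
  · have he2 : m + (l1 * m + l2) = m + (l1' * m + l2') := he
    have he3 : l1 * m + l2 = l1' * m + l2' := by omega
    obtain ⟨e1, e2⟩ := digit_unique b2 b2' he3
    exact ⟨rfl, e1, e2, (h2 rfl).trans (h2' rfl).symm⟩
  · exfalso
    have he2 : m + (l1 * m + l2) = m + m * m + ((l1' * m + l2') * m + l3') := he; omega
  · exfalso
    have he2 : m + m * m + ((l1 * m + l2) * m + l3) = 0 := he; omega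
  · exfalso
    have he2 : m + m * m + ((l1 * m + l2) * m + l3) = l1' := he; omega
  · exfalso
    have he2 : m + m * m + ((l1 * m + l2) * m + l3) = m + (l1' * m + l2') := he; omega
  · have he2 : m + m * m + ((l1 * m + l2) * m + l3) =
      m + m * m + ((l1' * m + l2') * m + l3') := he
    have he3 : (l1 * m + l2) * m + l3 = (l1' * m + l2') * m + l3' := by omega
    obtain ⟨e0, e3⟩ := digit_unique b3 b3' he3
    obtain ⟨e1, e2⟩ := digit_unique b2 b2' e0
    exact ⟨rfl, e1, e2, e3⟩

lemma encR_inj {m dR r1 r2 dR' r1' r2' : ℕ} (hm : 1 ≤ m)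
    (hdR : dR ≤ 2) (h0 : dR = 0 → r1 = 0 ∧ r2 = 0) (h1 : dR = 1 → 1 ≤ r1 ∧ r2 = 0)
    (b1 : r1 < m) (b2 : r2 < m)
    (hdR' : dR' ≤ 2) (h0' : dR' = 0 → r1' = 0 ∧ r2' = 0)
    (h1' : dR' = 1 → 1 ≤ r1' ∧ r2' = 0)
    (b1' : r1' < m) (b2' : r2' < m)
    (he : encR m dR r1 r2 = encR m dR' r1' r2') :
    dR = dR' ∧ r1 = r1' ∧ r2 = r2' := by
  have d1 : r1 * m + r2 < m * m := digitbound2 b1 b2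
  have d1' : r1' * m + r2' < m * m := digitbound2 b1' b2'
  have hc : dR = 0 ∨ dR = 1 ∨ dR = 2 := by omega
  have hc' : dR' = 0 ∨ dR' = 1 ∨ dR' = 2 := by omega
  rcases hc with rfl | rfl | rfl <;> rcases hc' with rfl | rfl | rfl
  · have := h0 rfl; have := h0' rfl; exact ⟨rfl, by omega, by omega⟩
  · exfalso; have he2 : (0:ℕ) = r1' := he; have := h1' rfl; omega
  · exfalso; have he2 : (0:ℕ) = m + (r1' * m + r2') := he; omega
  · exfalso; have he2 : r1 = 0 := he; have := h1 rfl; omega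
  · have he2 : r1 = r1' := he
    have := h1 rfl; have := h1' rfl
    exact ⟨rfl, he2, by omega⟩
  · exfalso; have he2 : r1 = m + (r1' * m + r2') := he; omega
  · exfalso; have he2 : m + (r1 * m + r2) = 0 := he; omega
  · exfalso; have he2 : m + (r1 * m + r2) = r1' := he; omega
  · have he2 : m + (r1 * m + r2) = m + (r1' * m + r2') := he
    have he3 : r1 * m + r2 = r1' * m + r2' := by omega
    obtain ⟨e1, e2⟩ := digit_unique b2 b2' he3
    exact ⟨rfl, e1, e2⟩


/-- Extend a Fin-indexed walk to ℕ. -/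
noncomputable def ext1 (n : ℕ) (w : Fin (n + 1) → ℤ × ℤ) : ℕ → ℤ × ℤ :=
  fun j => w ⟨min j n, by omega⟩

lemma ext1_eq (n : ℕ) (w : Fin (n + 1) → ℤ × ℤ) (i : Fin (n + 1)) :
    ext1 n w i.val = w i := by
  unfold ext1
  congr 1
  ext
  simp
  omega

lemma isSAW_transfer {n : ℕ} {w : Fin (n + 1) → ℤ × ℤ} (hw : IsSAW (-1) 1 n w) :
    OKn n (ext1 n w) ∧ ext1 n w 0 = (0, 0) := by
  obtain ⟨h0, hinj, hstrip, hstep⟩ := hw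
  have e0 : ext1 n w 0 = (0, 0) := by
    rw [show (0 : ℕ) = (0 : Fin (n+1)).val from rfl, ext1_eq, h0]
  refine ⟨⟨?_, ?_, ?_⟩, e0⟩
  · intro i j hi hj heq
    unfold ext1 at heq
    have := hinj heq
    have := congrArg Fin.val this
    simp at this
    omega
  · intro i hi
    exact hstrip _
  · intro i hi
    have := hstep ⟨i, hi⟩
    have e1 : ext1 n w (i + 1) = w (Fin.succ ⟨i, hi⟩) := by
      unfold ext1
      congr 1
      ext
      simp [Fin.succ]
      omega
    have e2 : ext1 n w i = w (Fin.castSucc ⟨i, hi⟩) := by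
      unfold ext1
      congr 1
      ext
      simp [Fin.castSucc, Fin.castAdd, Fin.castLE]
      omega
    rw [e1, e2]
    exact this

/-- build the Fin-level bridge -/
lemma isBridge_transfer {n : ℕ} {v : ℕ → ℤ × ℤ}
    (hok : OKn (n+1) v) (h0 : v 0 = (0, 0))
    (hstrict : ∀ j, 1 ≤ j → j ≤ n+1 → (v 0).1 < (v j).1)
    (hmax : ∀ j, j ≤ n+1 → (v j).1 ≤ (v (n+1)).1) :
    IsBridge (-1) 1 (n+1) (fun i : Fin (n+2) => v i.val) := by
  obtain ⟨hinj, hstrip, hstep⟩ := hok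
  refine ⟨⟨?_, ?_, ?_, ?_⟩, ?_⟩
  · show v ((0 : Fin (n+2)).val) = (0, 0)
    simpa using h0
  · intro i j heq
    have := hinj i.val j.val (by omega) (by omega) heq
    exact Fin.ext this
  · intro i
    exact hstrip i.val (by omega)
  · intro i
    have := hstep i.val (by omega)
    have e1 : (i.succ : Fin (n+2)).val = i.val + 1 := rfl
    have e2 : (i.castSucc : Fin (n+2)).val = i.val := rfl
    simp only [e1, e2]
    exact this
  · intro j hj
    have hjv : 1 ≤ j.val := by
      rcases Nat.eq_zero_or_pos j.val with hz | hp
      · exact absurd (Fin.ext hz : j = 0) hj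
      · omega
    have e0 : ((0 : Fin (n+2)).val) = 0 := rfl
    have eL : ((Fin.last (n+1)).val) = n + 1 := rfl
    constructor
    · show (v ((0:Fin (n+2)).val)).1 < (v j.val).1
      rw [e0]
      exact hstrict j.val hjv (by omega)
    · show (v j.val).1 ≤ (v ((Fin.last (n+1)).val)).1
      rw [eL]
      exact hmax j.val (by omega)

/-- x-coordinates of a SAW are bounded -/
lemma saw_xbound {n : ℕ} {w : Fin (n + 1) → ℤ × ℤ} (hw : IsSAW (-1) 1 n w) :
    ∀ i : Fin (n + 1), |(w i).1| ≤ n := by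
  obtain ⟨hok, h0⟩ := isSAW_transfer hw
  obtain ⟨hinj, hstrip, hstep⟩ := hok
  have hb : ∀ k, k ≤ n → |(ext1 n w k).1| ≤ (k : ℤ) := by
    intro k
    induction k with
    | zero => intro _; rw [h0]; simp
    | succ k ih =>
      intro hk
      have h1 := ih (by omega)
      have h2 := hstep k (by omega)
      have h3 : (0:ℤ) ≤ |(ext1 n w (k+1)).2 - (ext1 n w k).2| := abs_nonneg _
      have h4 : |(ext1 n w (k+1)).1 - (ext1 n w k).1| ≤ 1 := by omega
      rw [abs_le] at h1 h4 ⊢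
      push_cast
      push_cast at h1
      omega
  intro i
  have := hb i.val (by omega)
  rw [ext1_eq] at this
  calc |(w i).1| ≤ (i.val : ℤ) := this
  _ ≤ n := by
    have := i.isLt
    push_cast
    omega

lemma bridge_finite (n : ℕ) : Finite {v : Fin (n + 2) → ℤ × ℤ // IsBridge (-1) 1 (n+1) v} := by
  let box : Finset (ℤ × ℤ) := Finset.Icc (-(n+1) : ℤ) (n+1) ×ˢ Finset.Icc (-1 : ℤ) 1
  have hmem : ∀ (v : {v : Fin (n + 2) → ℤ × ℤ // IsBridge (-1) 1 (n+1) v}) (i : Fin (n+2)),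
      v.1 i ∈ box := by
    intro v i
    have hx := saw_xbound v.2.1 i
    have hy := v.2.1.2.2.1 i
    rw [abs_le] at hx
    simp only [box, Finset.mem_product, Finset.mem_Icc]
    constructor
    · constructor <;> [push_cast at hx ⊢; push_cast at hx ⊢] <;> omega
    · exact hy
  have hF : Function.Injective
      (fun (v : {v : Fin (n + 2) → ℤ × ℤ // IsBridge (-1) 1 (n+1) v}) =>
        (fun i => (⟨v.1 i, hmem v i⟩ : {x // x ∈ box}))) := by
    intro v v' heq
    apply Subtype.ext
    funext i
    have := congrFun heq i
    exact congrArg Subtype.val this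
  exact Finite.of_injective _ hF

lemma card_fin' (k : ℕ) : Nat.card (Fin k) = k := by
  simp [Nat.card_eq_fintype_card]


end Stmt13

/-- For `n ≥ 1`,
`c_{[−1,1],n} ≤ b_{[−1,1],n+1}·((n+1) + 2(n+1)² + 3(n+1)³ + 2(n+1)⁴ + (n+1)⁵)`. -/
theorem stmt_13 (n : ℕ) (hn : 1 ≤ n) :
    numSAW (-1) 1 n ≤ numBridge (-1) 1 (n + 1) *
      ((n + 1) + 2 * (n + 1) ^ 2 + 3 * (n + 1) ^ 3 + 2 * (n + 1) ^ 4 + (n + 1) ^ 5) := by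
  classical
  set m := n + 1 with hm
  set K1 := m + m * m + m * m * m with hK1
  set K2 := 1 + m + m * m with hK2
  haveI : Finite {v : Fin (n + 2) → ℤ × ℤ // IsBridge (-1) 1 (n+1) v} := Stmt13.bridge_finite n
  have H : ∀ W : {w : Fin (n+1) → ℤ × ℤ // IsSAW (-1) 1 n w},
      ∃ (v : ℕ → ℤ × ℤ) (dL l1 l2 l3 dR r1 r2 : ℕ),
      Stmt13.OKn (n+1) v ∧ v 0 = (0, 0) ∧
      (∀ j, 1 ≤ j → j ≤ n+1 → (v 0).1 < (v j).1) ∧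
      (∀ j, j ≤ n+1 → (v j).1 ≤ (v (n+1)).1) ∧
      dL ≤ 3 ∧ (dL = 0 → l1 = 0 ∧ l2 = 0 ∧ l3 = 0) ∧
      (dL = 1 → 1 ≤ l1 ∧ l2 = 0 ∧ l3 = 0) ∧ (dL = 2 → l3 = 0) ∧
      l1 ≤ n ∧ l2 ≤ n ∧ l3 ≤ n ∧
      dR ≤ 2 ∧ (dR = 0 → r1 = 0 ∧ r2 = 0) ∧ (dR = 1 → 1 ≤ r1 ∧ r2 = 0) ∧
      r1 ≤ n ∧ r2 ≤ n ∧
      Stmt13.decode v dL l1 l2 l3 dR r1 r2 = Stmt13.ext1 n W.1 :=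
    fun W => Stmt13.mainExists (Stmt13.isSAW_transfer W.2).1 (Stmt13.isSAW_transfer W.2).2
  choose v dL l1 l2 l3 dR r1 r2 hok hv0 hstrict hmax hdL3 hd0 hd1 hd2 hb1 hb2 hb3
    hdR2 hr0 hr1d hrb1 hrb2 hdec using H
  have lb : ∀ W, Stmt13.LBounds m (dL W) (l1 W) (l2 W) (l3 W) := by
    intro W
    exact ⟨by omega, hdL3 W, hd0 W, hd1 W, hd2 W,
      by have := hb1 W; omega, by have := hb2 W; omega, by have := hb3 W; omega⟩
  let F : {w : Fin (n+1) → ℤ × ℤ // IsSAW (-1) 1 n w} →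
      ({v : Fin (n + 2) → ℤ × ℤ // IsBridge (-1) 1 (n+1) v} × Fin K1 × Fin K2) :=
    fun W => ⟨⟨fun i => v W i.val,
        Stmt13.isBridge_transfer (hok W) (hv0 W) (hstrict W) (hmax W)⟩,
      ⟨Stmt13.encL m (dL W) (l1 W) (l2 W) (l3 W), Stmt13.encL_bound (lb W)⟩,
      ⟨Stmt13.encR m (dR W) (r1 W) (r2 W),
        Stmt13.encR_bound (by omega) (hdR2 W) (by have := hrb1 W; omega)
          (by have := hrb2 W; omega)⟩⟩
  have Finj : Function.Injective F := by
    intro W W' heq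
    simp only [F, Prod.mk.injEq, Subtype.mk.injEq, Fin.mk.injEq] at heq
    obtain ⟨hB, hc1, hc2⟩ := heq
    obtain ⟨edL, el1, el2, el3⟩ := Stmt13.encL_inj (lb W) (lb W') hc1
    obtain ⟨edR, er1, er2⟩ := Stmt13.encR_inj (show 1 ≤ m by omega) (hdR2 W) (hr0 W) (hr1d W)
      (by have := hrb1 W; omega) (by have := hrb2 W; omega)
      (hdR2 W') (hr0 W') (hr1d W')
      (by have := hrb1 W'; omega) (by have := hrb2 W'; omega) hc2
    have hagree : ∀ j, j ≤ n + 1 → v W j = v W' j := by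
      intro j hj
      exact congrFun hB ⟨j, by omega⟩
    have hdecc : ∀ j, j ≤ n → Stmt13.decode (v W) (dL W) (l1 W) (l2 W) (l3 W) (dR W)
        (r1 W) (r2 W) j = Stmt13.decode (v W') (dL W) (l1 W) (l2 W) (l3 W) (dR W)
        (r1 W) (r2 W) j :=
      Stmt13.decode_congr hagree (hb1 W) (hb2 W) (hb3 W)
        (by have := hrb1 W; omega) (by have := hrb2 W; omega)
    have hwk : ∀ j, j ≤ n → Stmt13.ext1 n W.1 j = Stmt13.ext1 n W'.1 j := by
      intro j hj
      rw [← hdec W, ← hdec W']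
      rw [edL, el1, el2, el3, edR, er1, er2] at hdecc ⊢
      exact hdecc j hj
    apply Subtype.ext
    funext i
    have := hwk i.val (by omega)
    rw [Stmt13.ext1_eq, Stmt13.ext1_eq] at this
    exact this
  have hcard : numSAW (-1) 1 n ≤ numBridge (-1) 1 (n+1) * (K1 * K2) := by
    have h1 : numSAW (-1) 1 n ≤ Nat.card
        ({v : Fin (n + 2) → ℤ × ℤ // IsBridge (-1) 1 (n+1) v} × Fin K1 × Fin K2) :=
      Nat.card_le_card_of_injective F Finj
    rw [Nat.card_prod, Nat.card_prod, Stmt13.card_fin', Stmt13.card_fin'] at h1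
    exact h1
  have hpoly : K1 * K2 = (n + 1) + 2 * (n + 1) ^ 2 + 3 * (n + 1) ^ 3 +
      2 * (n + 1) ^ 4 + (n + 1) ^ 5 := by
    rw [hK1, hK2, hm]
    ring
  rw [← hpoly]
  exact hcard
end
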